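/- arXiv:2407.02544 — 13 statements merged into one kernel-verified Lean document; each statement's English description precedes it below -/
import Mathlib

section
/- Let M be a symmetric real n×n matrix with zero diagonal and nonnegative entries, having exactly two distinct eigenvalues, of which the larger one is simple and positive. Then M = ν(J - I), where J is the all-ones matrix, I is the identity, and ν is the absolute value of the least eigenvalue of M. -/
open Matrix Finset BigOperators Real

noncomputable def lamMax {n : Type*} [Fintype n] [DecidableEq n] {A : Matrix n n ℝ}
    (hA : A.IsHermitian) : ℝ := ⨆ i, hA.eigenvalues i

noncomputable def lamMin {n : Type*} [Fintype n] [DecidableEq n] {A : Matrix n n ℝ}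
    (hA : A.IsHermitian) : ℝ := ⨅ i, hA.eigenvalues i

theorem adjHerm {V : Type*} [Fintype V] [DecidableEq V] (G : SimpleGraph V) [DecidableRel G.Adj] :
    (G.adjMatrix ℝ).IsHermitian := by
  ext i j
  simp [Matrix.conjTranspose_apply, SimpleGraph.adjMatrix_apply, SimpleGraph.adj_comm]

/-- a symmetric real n×n matrix with zero diagonal, nonnegative entries,
and exactly two distinct eigenvalues of which the larger is simple and positive,
equals ν(J - I) where ν is the absolute value of the least eigenvalue. -/
theorem stmt0 {n : ℕ} (hn : 2 ≤ n) (M : Matrix (Fin n) (Fin n) ℝ)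
    (hM : M.IsHermitian)
    (hdiag : ∀ i, M i i = 0)
    (hnonneg : ∀ i j, 0 ≤ M i j)
    (a b : ℝ) (hba : b < a) (ha : 0 < a)
    (hvals : ∀ i, hM.eigenvalues i = a ∨ hM.eigenvalues i = b)
    (hsimple : (Finset.univ.filter (fun i => hM.eigenvalues i = a)).card = 1)
    (hb_exists : ∃ i, hM.eigenvalues i = b) :
    b = lamMin hM ∧ M = |b| • (Matrix.of (fun _ _ => (1 : ℝ)) - 1) := by
  classical
  obtain ⟨i0, hi0⟩ := Finset.card_eq_one.mp hsimple
  have hmem : ∀ k, k ∈ Finset.univ.filter (fun i => hM.eigenvalues i = a) ↔ k = i0 := by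
    intro k; rw [hi0]; simp
  have hi0a : hM.eigenvalues i0 = a := by
    have := (hmem i0).mpr rfl
    simpa using this
  have huniq : ∀ k, hM.eigenvalues k = a → k = i0 := by
    intro k hk
    exact (hmem k).mp (by simpa using hk)
  set U : Matrix (Fin n) (Fin n) ℝ := (hM.eigenvectorUnitary : Matrix (Fin n) (Fin n) ℝ) with hU
  have hUU : U * star U = 1 := (Matrix.mem_unitaryGroup_iff).mp hM.eigenvectorUnitary.2
  have hUU' : star U * U = 1 := (Matrix.mem_unitaryGroup_iff').mp hM.eigenvectorUnitary.2
  have hrow : ∀ i j : Fin n, ∑ k, U i k * U j k = if i = j then 1 else 0 := by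
    intro i j
    rw [← Matrix.ext_iff] at hUU
    have := hUU i j
    simpa [Matrix.mul_apply, Matrix.star_apply, Matrix.one_apply] using this
  have hcol : ∑ k, U k i0 * U k i0 = 1 := by
    rw [← Matrix.ext_iff] at hUU'
    have := hUU' i0 i0
    simpa [Matrix.mul_apply, Matrix.star_apply, Matrix.one_apply] using this
  set v : Fin n → ℝ := fun i => U i i0 with hv
  have key : ∀ i j, M i j = b * (if i = j then 1 else 0) + (a - b) * (v i * v j) := by
    intro i j
    have hspec := hM.spectral_theorem
    rw [← Matrix.ext_iff] at hspec
    have h1 : M i j = ∑ k, U i k * hM.eigenvalues k * U j k := by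
      rw [hspec i j, Unitary.conjStarAlgAut_apply, Matrix.mul_apply]
      refine Finset.sum_congr rfl fun k _ => ?_
      rw [Matrix.mul_diagonal, Matrix.star_apply]
      simp [Function.comp, hU]
    rw [h1]
    have h2 : ∀ k, hM.eigenvalues k = b + (if k = i0 then a - b else 0) := by
      intro k
      by_cases hk : k = i0
      · simp [hk, hi0a]
      · rcases hvals k with h | h
        · exact absurd (huniq k h) hk
        · simp [hk, h]
    calc ∑ k, U i k * hM.eigenvalues k * U j k
        = ∑ k, (b * (U i k * U j k) + (if k = i0 then (a-b) * (U i k * U j k) else 0)) := by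
          refine Finset.sum_congr rfl fun k _ => ?_
          rw [h2 k]; by_cases hk : k = i0 <;> simp [hk] <;> ring
      _ = b * (∑ k, U i k * U j k) + (a - b) * (v i * v j) := by
          rw [Finset.sum_add_distrib, ← Finset.mul_sum, Finset.sum_ite_eq' Finset.univ i0]
          simp [hv]
      _ = b * (if i = j then 1 else 0) + (a - b) * (v i * v j) := by rw [hrow]
  have hab : 0 < a - b := by linarith
  have hsq : ∀ i, (a - b) * (v i * v i) = -b := by
    intro i
    have h := key i i
    rw [hdiag i, if_pos rfl] at h
    linarith
  have hsum : (a - b) = (-b) * n := by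
    have h : ∑ i : Fin n, (a - b) * (v i * v i) = ∑ _i : Fin n, (-b) :=
      Finset.sum_congr rfl (fun i _ => hsq i)
    rw [← Finset.mul_sum] at h
    have hc : ∑ i : Fin n, v i * v i = 1 := hcol
    rw [hc] at h
    simpa [mul_comm] using h
  have hn' : (2:ℝ) ≤ (n:ℝ) := by exact_mod_cast hn
  have hbneg : b < 0 := by nlinarith
  have hoff : ∀ i j, i ≠ j → M i j = -b := by
    intro i j hij
    have hk := key i j
    rw [if_neg hij] at hk
    rw [mul_zero, zero_add] at hk
    have hnn : 0 ≤ (a - b) * (v i * v j) := hk ▸ hnonneg i j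
    have hsq' : ((a-b) * (v i * v j))^2 = b^2 := by
      have h1 := hsq i; have h2 := hsq j
      nlinarith
    have h3 : ((a-b) * (v i * v j) + b) * ((a-b) * (v i * v j) - b) = 0 := by
      linear_combination hsq'
    rcases mul_eq_zero.mp h3 with h4 | h4
    · rw [hk]; linarith
    · exfalso; nlinarith
  have : Nonempty (Fin n) := ⟨⟨0, by omega⟩⟩
  constructor
  · unfold lamMin
    apply le_antisymm
    · refine le_ciInf fun i => ?_
      rcases hvals i with h | h <;> rw [h] <;> linarith
    · obtain ⟨i, hi⟩ := hb_exists
      exact le_trans (ciInf_le (Set.Finite.bddBelow (Set.finite_range _)) i) (le_of_eq hi)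
  · ext i j
    by_cases hij : i = j
    · subst hij
      simp [hdiag, Matrix.one_apply, Matrix.smul_apply, Matrix.sub_apply]
    · rw [abs_of_neg hbneg]
      simp [Matrix.smul_apply, Matrix.sub_apply, Matrix.one_apply, hij, hoff i j hij]
end

section
/- A symmetric real n×n matrix with zero diagonal whose spectrum consists of a simple eigenvalue (n-1)ν and eigenvalue -ν with multiplicity n-1 (ν > 0), and all of whose entries are nonnegative, has a Perron eigenvector for eigenvalue (n-1)ν that is a constant vector. -/
open Matrix Finset BigOperators Real

lemma quadId {n : ℕ} (M : Matrix (Fin n) (Fin n) ℝ) (hM : M.IsHermitian) (a ν : ℝ)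
    (hvals : ∀ i, hM.eigenvalues i = a ∨ hM.eigenvalues i = -ν) :
    M * M = (a - ν) • M + (a * ν) • 1 := by
  have hsp := hM.spectral_theorem
  set U : Matrix (Fin n) (Fin n) ℝ := (hM.eigenvectorUnitary : Matrix (Fin n) (Fin n) ℝ) with hU
  have hUU : star U * U = 1 := Unitary.coe_star_mul_self hM.eigenvectorUnitary
  have hUU' : U * star U = 1 := Unitary.coe_mul_star_self hM.eigenvectorUnitary
  have hof : (RCLike.ofReal ∘ hM.eigenvalues : Fin n → ℝ) = hM.eigenvalues := by
    funext i; simp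
  rw [hof, Unitary.conjStarAlgAut_apply, ← hU] at hsp
  set D : Matrix (Fin n) (Fin n) ℝ := diagonal hM.eigenvalues with hD
  have hDD : D * D = (a - ν) • D + (a * ν) • 1 := by
    rw [hD, diagonal_mul_diagonal]
    ext i j
    by_cases hij : i = j
    · subst hij
      rcases hvals i with h | h <;> simp [h, Matrix.one_apply] <;> ring
    · simp [Matrix.diagonal_apply_ne _ hij, Matrix.one_apply, hij]
  have hmid : star U * (U * (D * star U)) = D * star U := by
    rw [← Matrix.mul_assoc, hUU, Matrix.one_mul]
  calc M * M = U * (D * D) * star U := by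
        rw [hsp]; simp only [Matrix.mul_assoc, hmid]
    _ = (a - ν) • (U * D * star U) + (a * ν) • (U * star U) := by
        rw [hDD, Matrix.mul_add, Matrix.add_mul, Matrix.mul_smul, Matrix.smul_mul,
          Matrix.mul_smul, Matrix.smul_mul, Matrix.mul_one, Matrix.mul_assoc]
    _ = (a - ν) • M + (a * ν) • 1 := by rw [← hsp, hUU']

/-- a symmetric real n×n matrix with zero diagonal, nonnegative entries and
spectrum {(n-1)ν (simple), (-ν)^{n-1}} with ν > 0 has a constant Perron eigenvector for
the eigenvalue (n-1)ν: any eigenvector for that eigenvalue is a constant vector. -/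
theorem stmt1 {n : ℕ} (hn : 2 ≤ n) (M : Matrix (Fin n) (Fin n) ℝ)
    (hM : M.IsHermitian)
    (hdiag : ∀ i, M i i = 0)
    (hnonneg : ∀ i j, 0 ≤ M i j)
    (ν : ℝ) (hν : 0 < ν)
    (hvals : ∀ i, hM.eigenvalues i = ((n : ℝ) - 1) * ν ∨ hM.eigenvalues i = -ν)
    (hsimple : (Finset.univ.filter (fun i => hM.eigenvalues i = ((n : ℝ) - 1) * ν)).card = 1)
    (hmult : (Finset.univ.filter (fun i => hM.eigenvalues i = -ν)).card = n - 1)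
    (x : Fin n → ℝ) (hx : x ≠ 0)
    (heig : M.mulVec x = (((n : ℝ) - 1) * ν) • x) :
    ∀ i j, x i = x j := by
  set a : ℝ := ((n : ℝ) - 1) * ν with ha
  have key := quadId M hM a ν hvals
  have hsym : ∀ i j, M j i = M i j := by
    intro i j
    have := congrFun (congrFun hM i) j
    simpa [Matrix.conjTranspose_apply] using this
  -- row square sums
  have hsq : ∀ i, ∑ j, (M i j) ^ 2 = a * ν := by
    intro i
    have h := congrFun (congrFun key i) i
    have hlhs : (M * M) i i = ∑ j, (M i j) ^ 2 := by
      rw [Matrix.mul_apply]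
      exact Finset.sum_congr rfl fun j _ => by rw [hsym i j]; ring
    have hrhs : ((a - ν) • M + (a * ν) • (1 : Matrix (Fin n) (Fin n) ℝ)) i i = a * ν := by
      simp [Matrix.add_apply, Matrix.smul_apply, hdiag i, Matrix.one_apply_eq]
    rw [hlhs, hrhs] at h
    exact h
  set Q : Fin n → Fin n → ℝ := fun i j => M i j + if i = j then ν else 0 with hQdef
  have hQsq : ∀ i, ∑ j, (Q i j) ^ 2 = (n : ℝ) * ν ^ 2 := by
    intro i
    have hterm : ∀ j ∈ Finset.univ, (Q i j) ^ 2
        = (M i j) ^ 2 + (if i = j then 2 * ν * M i j + ν ^ 2 else 0) := by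
      intro j _
      by_cases h : i = j <;> simp [hQdef, h] <;> ring
    rw [Finset.sum_congr rfl hterm, Finset.sum_add_distrib, hsq i, Finset.sum_ite_eq]
    simp [hdiag i, ha]
    ring
  have hmv : ∀ i, ∑ j, Q i j * x j = ((n : ℝ) * ν) * x i := by
    intro i
    have h := congrFun heig i
    have hlhs : M.mulVec x i = ∑ j, M i j * x j := by
      simp [Matrix.mulVec, dotProduct]
    rw [hlhs] at h
    have : ∑ j, Q i j * x j = (∑ j, M i j * x j) + ν * x i := by
      have : ∀ j ∈ Finset.univ, Q i j * x j
          = M i j * x j + (if i = j then ν * x j else 0) := by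
        intro j _
        by_cases hij : i = j <;> simp [hQdef, hij] <;> ring
      rw [Finset.sum_congr rfl this, Finset.sum_add_distrib, Finset.sum_ite_eq]
      simp
    rw [this, h]
    simp only [Pi.smul_apply, smul_eq_mul, ha]
    ring
  set s : ℝ := ∑ j, (x j) ^ 2 with hsdef
  have hspos : 0 < s := by
    obtain ⟨i, hi⟩ := Function.ne_iff.mp hx
    have : (0:ℝ) < x i ^ 2 := pow_two_pos_of_ne_zero hi
    exact Finset.sum_pos' (fun j _ => sq_nonneg _) ⟨i, Finset.mem_univ i, this⟩
  -- the magic vanishing sum of squares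
  have hzero : ∑ i, ∑ j, (Q i j * s - ((n : ℝ) * ν) * (x i * x j)) ^ 2 = 0 := by
    have inner : ∀ i ∈ Finset.univ, ∑ j, (Q i j * s - ((n : ℝ) * ν) * (x i * x j)) ^ 2
        = (n : ℝ) * ν ^ 2 * s ^ 2 - ((n : ℝ) * ν) ^ 2 * s * x i ^ 2 := by
      intro i _
      have hterm : ∀ j ∈ Finset.univ, (Q i j * s - ((n : ℝ) * ν) * (x i * x j)) ^ 2
          = s ^ 2 * (Q i j) ^ 2 - (2 * ((n : ℝ) * ν) * s * x i) * (Q i j * x j)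
            + (((n : ℝ) * ν) ^ 2 * x i ^ 2) * (x j) ^ 2 := by
        intro j _; ring
      rw [Finset.sum_congr rfl hterm, Finset.sum_add_distrib, Finset.sum_sub_distrib,
        ← Finset.mul_sum, ← Finset.mul_sum, ← Finset.mul_sum, hQsq i, hmv i, ← hsdef]
      ring
    rw [Finset.sum_congr rfl inner, Finset.sum_sub_distrib, Finset.sum_const, ← Finset.mul_sum,
      ← hsdef, Finset.card_univ, Fintype.card_fin, nsmul_eq_mul]
    ring
  have heach : ∀ i j, Q i j * s = ((n : ℝ) * ν) * (x i * x j) := by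
    intro i j
    have houter := (Finset.sum_eq_zero_iff_of_nonneg
      (fun i _ => Finset.sum_nonneg fun j _ => sq_nonneg _)).mp hzero i (Finset.mem_univ i)
    have hinner := (Finset.sum_eq_zero_iff_of_nonneg
      (fun j _ => sq_nonneg _)).mp houter j (Finset.mem_univ j)
    have := sq_eq_zero_iff.mp hinner
    linarith [this]
  have hx2 : ∀ i, (n : ℝ) * x i ^ 2 = s := by
    intro i
    have h := heach i i
    have hQii : Q i i = ν := by simp [hQdef, hdiag i]
    rw [hQii] at h
    have : ν * s = ν * ((n : ℝ) * x i ^ 2) := by rw [h]; ring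
    exact (mul_left_cancel₀ (ne_of_gt hν) this).symm
  have hnpos : (0:ℝ) < n := by positivity
  have hxne : ∀ i, x i ≠ 0 := by
    intro i hxi
    have := hx2 i
    rw [hxi] at this
    simp at this
    linarith
  intro i j
  by_cases hij : i = j
  · rw [hij]
  · have hprod : 0 ≤ x i * x j := by
      have h := heach i j
      have hQ : Q i j = M i j := by simp [hQdef, hij]
      rw [hQ] at h
      have h1 : 0 ≤ M i j * s := mul_nonneg (hnonneg i j) (le_of_lt hspos)
      nlinarith [mul_pos hnpos hν]
    have hsq2 : x i * x i = x j * x j := by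
      have := (hx2 i).trans (hx2 j).symm
      have h2 : x i ^ 2 = x j ^ 2 := by
        field_simp at this
        linarith
      nlinarith [h2]
    rcases mul_self_eq_mul_self_iff.mp hsq2 with h | h
    · exact h
    · exfalso
      have hj := hxne j
      have : x i * x j = -(x j * x j) := by rw [h]; ring
      have hjj : 0 < x j * x j := mul_self_pos.mpr hj
      linarith [hprod, this]
end

section
/- Hoffman's bound: for any nonempty graph G (a graph with at least one edge), the chromatic number satisfies χ(G) ≥ 1 - λ_max(G)/λ_min(G), where λ_max and λ_min are the largest and smallest eigenvalues of the adjacency matrix of G. -/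
open Matrix Finset BigOperators Real

lemma rayleigh_min_aux {n : Type*} [Fintype n] [DecidableEq n] [Nonempty n]
    {A : Matrix n n ℝ} (hA : A.IsHermitian) (x : n → ℝ) :
    (⨅ i, hA.eigenvalues i) * (x ⬝ᵥ x) ≤ x ⬝ᵥ (A *ᵥ x) := by
  set U : Matrix n n ℝ := (hA.eigenvectorUnitary : Matrix n n ℝ) with hU
  have hUU : U * star U = 1 := Matrix.mem_unitaryGroup_iff.mp hA.eigenvectorUnitary.2
  have hUU' : star U * U = 1 := Matrix.mem_unitaryGroup_iff'.mp hA.eigenvectorUnitary.2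
  set y : n → ℝ := star U *ᵥ x with hy
  have hstar : star U = Uᵀ := by
    rw [Matrix.star_eq_conjTranspose, Matrix.conjTranspose_eq_transpose_of_trivial]
  have hxy : x ⬝ᵥ (A *ᵥ x) = ∑ i, hA.eigenvalues i * (y i)^2 := by
    conv_lhs => rw [hA.spectral_theorem, Unitary.conjStarAlgAut_apply]
    rw [← Matrix.mulVec_mulVec, ← Matrix.mulVec_mulVec, Matrix.dotProduct_mulVec,
      ← Matrix.mulVec_transpose, ← hstar, ← hy]
    simp [Matrix.mulVec_diagonal, dotProduct, mul_comm, sq, mul_assoc, mul_left_comm]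
  have hxx : x ⬝ᵥ x = ∑ i, (y i)^2 := by
    have hx : x = U *ᵥ y := by
      rw [hy, Matrix.mulVec_mulVec, hUU, Matrix.one_mulVec]
    conv_lhs => rw [hx]
    rw [Matrix.dotProduct_mulVec, ← Matrix.mulVec_transpose, ← hstar,
      Matrix.mulVec_mulVec, hUU', Matrix.one_mulVec]
    simp [dotProduct, sq]
  rw [hxy, hxx, Finset.mul_sum]
  apply Finset.sum_le_sum
  intro i _
  exact mul_le_mul_of_nonneg_right (ciInf_le (Finite.bddBelow_range _) i) (sq_nonneg _)

lemma rayleigh_max_aux {n : Type*} [Fintype n] [DecidableEq n] [Nonempty n]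
    {A : Matrix n n ℝ} (hA : A.IsHermitian) (x : n → ℝ) :
    x ⬝ᵥ (A *ᵥ x) ≤ (⨆ i, hA.eigenvalues i) * (x ⬝ᵥ x) := by
  set U : Matrix n n ℝ := (hA.eigenvectorUnitary : Matrix n n ℝ) with hU
  have hUU : U * star U = 1 := Matrix.mem_unitaryGroup_iff.mp hA.eigenvectorUnitary.2
  have hUU' : star U * U = 1 := Matrix.mem_unitaryGroup_iff'.mp hA.eigenvectorUnitary.2
  set y : n → ℝ := star U *ᵥ x with hy
  have hstar : star U = Uᵀ := by
    rw [Matrix.star_eq_conjTranspose, Matrix.conjTranspose_eq_transpose_of_trivial]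
  have hxy : x ⬝ᵥ (A *ᵥ x) = ∑ i, hA.eigenvalues i * (y i)^2 := by
    conv_lhs => rw [hA.spectral_theorem, Unitary.conjStarAlgAut_apply]
    rw [← Matrix.mulVec_mulVec, ← Matrix.mulVec_mulVec, Matrix.dotProduct_mulVec,
      ← Matrix.mulVec_transpose, ← hstar, ← hy]
    simp [Matrix.mulVec_diagonal, dotProduct, mul_comm, sq, mul_assoc, mul_left_comm]
  have hxx : x ⬝ᵥ x = ∑ i, (y i)^2 := by
    have hx : x = U *ᵥ y := by
      rw [hy, Matrix.mulVec_mulVec, hUU, Matrix.one_mulVec]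
    conv_lhs => rw [hx]
    rw [Matrix.dotProduct_mulVec, ← Matrix.mulVec_transpose, ← hstar,
      Matrix.mulVec_mulVec, hUU', Matrix.one_mulVec]
    simp [dotProduct, sq]
  rw [hxy, hxx, Finset.mul_sum]
  apply Finset.sum_le_sum
  intro i _
  exact mul_le_mul_of_nonneg_right (le_ciSup (Finite.bddAbove_range _) i) (sq_nonneg _)

lemma eig_max_exists {n : Type*} [Fintype n] [DecidableEq n] [Nonempty n]
    {A : Matrix n n ℝ} (hA : A.IsHermitian) :
    ∃ x : n → ℝ, 0 < x ⬝ᵥ x ∧ x ⬝ᵥ (A *ᵥ x) = (⨆ i, hA.eigenvalues i) * (x ⬝ᵥ x) := by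
  obtain ⟨i₀, hi₀⟩ := Finite.exists_max hA.eigenvalues
  have hsup : (⨆ i, hA.eigenvalues i) = hA.eigenvalues i₀ :=
    le_antisymm (ciSup_le hi₀) (le_ciSup (Finite.bddAbove_range _) i₀)
  refine ⟨⇑(hA.eigenvectorBasis i₀), ?_, ?_⟩
  · have hne : ⇑(hA.eigenvectorBasis i₀) ≠ 0 := by
      intro h
      exact hA.eigenvectorBasis.orthonormal.ne_zero i₀ (by ext j; exact congrFun h j)
    obtain ⟨j, hj⟩ := Function.ne_iff.mp hne
    refine Finset.sum_pos' (fun t _ => mul_self_nonneg _) ⟨j, Finset.mem_univ j, ?_⟩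
    exact mul_self_pos.mpr hj
  · rw [hA.mulVec_eigenvectorBasis, hsup]
    simp [dotProduct_smul, smul_eq_mul]

theorem stmt2 {V : Type*} [Fintype V] [DecidableEq V] (G : SimpleGraph V)
    [DecidableRel G.Adj]
    (hedge : G.edgeSet.Nonempty)
    (χ : ℕ) (hχ : G.chromaticNumber = χ) :
    (χ : ℝ) ≥ 1 - lamMax (adjHerm G) / lamMin (adjHerm G) := by
  classical
  obtain ⟨e, he⟩ := hedge
  obtain ⟨u, v, huv⟩ : ∃ u v, G.Adj u v := by
    induction e using Sym2.ind with
    | _ u v => exact ⟨u, v, he⟩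
  haveI : Nonempty V := ⟨u⟩
  set A : Matrix V V ℝ := G.adjMatrix ℝ with hAdef
  set lmin := lamMin (adjHerm G) with hlmin
  set lmax := lamMax (adjHerm G) with hlmax
  have hlminr : lmin = ⨅ i, (adjHerm G).eigenvalues i := rfl
  have hlmaxr : lmax = ⨆ i, (adjHerm G).eigenvalues i := rfl
  -- lmin ≤ -1
  have hmin_neg : lmin ≤ -1 := by
    have h := rayleigh_min_aux (adjHerm G) (Pi.single u 1 - Pi.single v 1)
    rw [← hlminr] at h
    have h1 : (Pi.single u 1 - Pi.single v 1 : V → ℝ) ⬝ᵥ (Pi.single u 1 - Pi.single v 1 : V → ℝ) = 2 := by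
      simp [sub_dotProduct, dotProduct_sub, dotProduct_single,
        single_dotProduct, Pi.single_apply, huv.ne]
      norm_num
    have h2 : (Pi.single u 1 - Pi.single v 1 : V → ℝ) ⬝ᵥ (A *ᵥ (Pi.single u 1 - Pi.single v 1)) = -2 := by
      simp [Matrix.mulVec_sub, Matrix.mulVec_single, dotProduct_sub,
        sub_dotProduct, single_dotProduct, hAdef, huv, huv.symm]
      norm_num
    rw [h1, h2] at h
    linarith
  have hmax_pos : (1:ℝ) ≤ lmax := by
    have h := rayleigh_max_aux (adjHerm G) (Pi.single u 1 + Pi.single v 1)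
    rw [← hlmaxr] at h
    have h1 : (Pi.single u 1 + Pi.single v 1 : V → ℝ) ⬝ᵥ (Pi.single u 1 + Pi.single v 1 : V → ℝ) = 2 := by
      simp [add_dotProduct, dotProduct_add, dotProduct_single,
        single_dotProduct, Pi.single_apply, huv.ne]
      norm_num
    have h2 : (Pi.single u 1 + Pi.single v 1 : V → ℝ) ⬝ᵥ (A *ᵥ (Pi.single u 1 + Pi.single v 1)) = 2 := by
      simp [Matrix.mulVec_add, Matrix.mulVec_single, dotProduct_add,
        add_dotProduct, single_dotProduct, hAdef, huv, huv.symm]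
      norm_num
    rw [h1, h2] at h
    linarith
  -- coloring
  have hcol : G.Colorable χ := SimpleGraph.chromaticNumber_le_iff_colorable.mp (le_of_eq hχ)
  obtain ⟨C⟩ := hcol
  have hk2 : 2 ≤ χ := by
    have : Nontrivial (Fin χ) := ⟨C u, C v, C.valid huv⟩
    exact (by simpa using Fintype.one_lt_card (α := Fin χ) : 1 < χ)
  have hχpos : (0:ℝ) < χ := by exact_mod_cast Nat.lt_of_lt_of_le (by norm_num) hk2
  obtain ⟨x, hs, hx⟩ := eig_max_exists (adjHerm G)
  rw [← hlmaxr] at hx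
  set c : Fin χ → Fin χ → ℝ := fun i j => if j = i then 1 - (χ:ℝ) else 1 with hc
  set z : Fin χ → V → ℝ := fun i w => c i (C w) * x w with hz
  have hcaa : ∀ a : Fin χ, c a a = 1 - (χ:ℝ) := by
    intro a; rw [hc]; simp
  have hcab : ∀ a b : Fin χ, b ≠ a → c a b = 1 := by
    intro a b hba; rw [hc]; simp [hba]
  have csum1 : ∀ a : Fin χ, ∑ i, c i a * c i a = (χ:ℝ)^2 - χ := by
    intro a
    rw [← Finset.add_sum_erase _ _ (Finset.mem_univ a)]
    have h2 : ∑ i ∈ Finset.univ.erase a, c i a * c i a = ((χ:ℝ) - 1) := by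
      have e : ∀ i ∈ Finset.univ.erase a, c i a * c i a = 1 := by
        intro i hi
        rw [hcab i a (Finset.mem_erase.mp hi).1.symm]; ring
      rw [Finset.sum_congr rfl e]
      simp [Finset.card_erase_of_mem, Nat.cast_sub (by omega : 1 ≤ χ)]
    rw [hcaa, h2]; ring
  have csum2 : ∀ a b : Fin χ, a ≠ b → ∑ i, c i a * c i b = -(χ:ℝ) := by
    intro a b hab
    have hbmem : b ∈ Finset.univ.erase a := Finset.mem_erase.mpr ⟨hab.symm, Finset.mem_univ b⟩
    rw [← Finset.add_sum_erase _ _ (Finset.mem_univ a),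
      ← Finset.add_sum_erase _ _ hbmem]
    have h3 : ∑ i ∈ (Finset.univ.erase a).erase b, c i a * c i b = ((χ:ℝ) - 2) := by
      have e : ∀ i ∈ (Finset.univ.erase a).erase b, c i a * c i b = 1 := by
        intro i hi
        obtain ⟨hib, hia⟩ := Finset.mem_erase.mp hi
        rw [hcab i a (Finset.mem_erase.mp hia).1.symm, hcab i b hib.symm]; ring
      rw [Finset.sum_congr rfl e]
      have : ((Finset.univ.erase a).erase b).card = χ - 2 := by
        rw [Finset.card_erase_of_mem hbmem, Finset.card_erase_of_mem (Finset.mem_univ a)]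
        simp; omega
      simp [this, Nat.cast_sub hk2]
    rw [hcaa, hcab a b hab.symm, hcaa, hcab b a hab, h3]; ring
  have key : ∀ i : Fin χ, lmin * (z i ⬝ᵥ z i) ≤ z i ⬝ᵥ (A *ᵥ z i) := by
    intro i
    have := rayleigh_min_aux (adjHerm G) (z i)
    rwa [← hlminr] at this
  have sumN : ∑ i, (z i ⬝ᵥ z i) = ((χ:ℝ)^2 - χ) * (x ⬝ᵥ x) := by
    have e : ∀ i ∈ (Finset.univ : Finset (Fin χ)),
        z i ⬝ᵥ z i = ∑ w, (c i (C w) * c i (C w)) * (x w * x w) := by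
      intro i _
      simp only [dotProduct, hz]
      exact Finset.sum_congr rfl (fun w _ => by ring)
    rw [Finset.sum_congr rfl e, Finset.sum_comm]
    have e2 : ∀ w ∈ (Finset.univ : Finset V),
        ∑ i : Fin χ, (c i (C w) * c i (C w)) * (x w * x w)
          = ((χ:ℝ)^2 - χ) * (x w * x w) := by
      intro w _
      rw [← Finset.sum_mul, csum1]
    rw [Finset.sum_congr rfl e2]
    simp only [dotProduct, Finset.mul_sum]
  have sumQ : ∑ i, (z i ⬝ᵥ (A *ᵥ z i)) = (-(χ:ℝ)) * (x ⬝ᵥ (A *ᵥ x)) := by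
    have e : ∀ i ∈ (Finset.univ : Finset (Fin χ)), z i ⬝ᵥ (A *ᵥ z i)
        = ∑ p, ∑ q, (c i (C p) * c i (C q)) * (A p q * (x p * x q)) := by
      intro i _
      simp only [dotProduct, Matrix.mulVec, hz, Finset.mul_sum]
      exact Finset.sum_congr rfl (fun p _ => Finset.sum_congr rfl (fun q _ => by
        ring))
    rw [Finset.sum_congr rfl e, Finset.sum_comm]
    have e2 : ∀ p ∈ (Finset.univ : Finset V),
        ∑ i : Fin χ, ∑ q, (c i (C p) * c i (C q)) * (A p q * (x p * x q))
        = ∑ q, (-(χ:ℝ)) * (A p q * (x p * x q)) := by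
      intro p _
      rw [Finset.sum_comm]
      refine Finset.sum_congr rfl (fun q _ => ?_)
      by_cases hadj : G.Adj p q
      · rw [← Finset.sum_mul, csum2 _ _ (C.valid hadj)]
      · have h0 : A p q = 0 := by simp [hAdef, hadj]
        simp [h0]
    rw [Finset.sum_congr rfl e2]
    simp only [dotProduct, Matrix.mulVec, Finset.mul_sum]
    exact Finset.sum_congr rfl (fun p _ => Finset.sum_congr rfl (fun q _ => by
      ring))
  have hsum : lmin * (((χ:ℝ)^2 - χ) * (x ⬝ᵥ x)) ≤ (-(χ:ℝ)) * (lmax * (x ⬝ᵥ x)) := by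
    have h := Finset.sum_le_sum (fun i (_ : i ∈ Finset.univ) => key i)
    rwa [← Finset.mul_sum, sumN, sumQ, hx] at h
  have hkey : lmin * ((χ:ℝ) - 1) ≤ -lmax := by
    have h1 : (lmin * ((χ:ℝ) - 1)) * ((χ:ℝ) * (x ⬝ᵥ x)) ≤ (-lmax) * ((χ:ℝ) * (x ⬝ᵥ x)) := by
      nlinarith [hsum]
    exact le_of_mul_le_mul_right h1 (by positivity)
  have hminlt : lmin < 0 := lt_of_le_of_lt hmin_neg (by norm_num)
  have hdiv : -(lmax/lmin) ≤ (χ:ℝ) - 1 := by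
    rw [neg_div', div_le_iff_of_neg hminlt]
    linarith [hkey]
  linarith [hdiv]
end

section
/- Ratio bound (Hoffman): if G is a k-regular graph on n vertices with least adjacency eigenvalue λ_min, then the independence number satisfies α(G) ≤ n·(-λ_min)/(k - λ_min). -/
open Matrix Finset BigOperators Real

lemma rayleigh_min {n : Type*} [Fintype n] [DecidableEq n] [Nonempty n] {A : Matrix n n ℝ}
    (hA : A.IsHermitian) (x : n → ℝ) :
    lamMin hA * (x ⬝ᵥ x) ≤ x ⬝ᵥ (A *ᵥ x) := by
  classical
  set U : Matrix n n ℝ := (hA.eigenvectorUnitary : Matrix n n ℝ) with hU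
  have hspec : A = U * Matrix.diagonal hA.eigenvalues * Uᵀ := by
    have := hA.spectral_theorem
    simpa [RCLike.ofReal_real_eq_id, Function.comp, star, hU] using this
  set y : n → ℝ := Uᵀ *ᵥ x with hy
  have hxy : x ⬝ᵥ (A *ᵥ x) = ∑ i, hA.eigenvalues i * (y i * y i) := by
    conv_lhs => rw [hspec]
    rw [← Matrix.mulVec_mulVec, ← Matrix.mulVec_mulVec]
    rw [Matrix.dotProduct_mulVec, ← Matrix.mulVec_transpose]
    simp [Matrix.mulVec_diagonal, dotProduct, hy]
    ring_nf
    exact Finset.sum_congr rfl fun i _ => by ring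
  have hnorm : x ⬝ᵥ x = ∑ i, y i * y i := by
    have hUU : U * Uᵀ = 1 := by
      have := (Matrix.mem_unitaryGroup_iff).mp hA.eigenvectorUnitary.2
      simpa [star, hU] using this
    calc x ⬝ᵥ x = x ⬝ᵥ ((U * Uᵀ) *ᵥ x) := by rw [hUU]; simp
    _ = ∑ i, y i * y i := by
        rw [← Matrix.mulVec_mulVec, Matrix.dotProduct_mulVec, ← Matrix.mulVec_transpose]
        simp [dotProduct, hy]
  rw [hxy, hnorm, Finset.mul_sum]
  apply Finset.sum_le_sum
  intro i _
  have h1 : lamMin hA ≤ hA.eigenvalues i := ciInf_le (Finite.bddBelow_range _) i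
  nlinarith [mul_self_nonneg (y i)]

/-- ratio bound: for a k-regular graph G on n vertices with at least one edge,
every independent set s satisfies |s| ≤ n·(-λ_min)/(k - λ_min). -/
theorem stmt3 {V : Type*} [Fintype V] [DecidableEq V] (G : SimpleGraph V)
    [DecidableRel G.Adj]
    (k : ℕ) (hreg : G.IsRegularOfDegree k)
    (hedge : G.edgeSet.Nonempty)
    (s : Finset V) (hs : ∀ u ∈ s, ∀ v ∈ s, ¬ G.Adj u v) :
    (s.card : ℝ) ≤ (Fintype.card V : ℝ) * (-(lamMin (adjHerm G))) /
      ((k : ℝ) - lamMin (adjHerm G)) := by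
  classical
  obtain ⟨u, v, huv⟩ : ∃ u v, G.Adj u v := by
    obtain ⟨e, he⟩ := hedge
    induction e using Sym2.ind with
    | _ a b => exact ⟨a, b, he⟩
  haveI : Nonempty V := ⟨u⟩
  set lam : ℝ := lamMin (adjHerm G) with hlamdef
  have hne : u ≠ v := G.ne_of_adj huv
  -- λ_min < 0
  have hlamneg : lam < 0 := by
    have hray := rayleigh_min (adjHerm G) (Pi.single u 1 - Pi.single v 1)
    have hzz : (Pi.single u 1 - Pi.single v 1 : V → ℝ) ⬝ᵥ (Pi.single u 1 - Pi.single v 1) = 2 := by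
      simp [sub_dotProduct, dotProduct_sub, dotProduct_single,
        single_dotProduct, Pi.single_apply, hne, hne.symm]
      norm_num
    have hAz : (Pi.single u 1 - Pi.single v 1 : V → ℝ) ⬝ᵥ
        (G.adjMatrix ℝ *ᵥ (Pi.single u 1 - Pi.single v 1)) = -2 := by
      simp [Matrix.mulVec_sub, Matrix.mulVec_single, sub_dotProduct,
        dotProduct_sub, single_dotProduct, SimpleGraph.adjMatrix_apply,
        huv, huv.symm]
      norm_num
    rw [hzz, hAz] at hray
    linarith
  have hk : (0:ℝ) < (k:ℝ) - lam := by
    have : (0:ℝ) ≤ (k:ℝ) := Nat.cast_nonneg k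
    linarith
  set n : ℝ := (Fintype.card V : ℝ) with hndef
  have hn : 0 < n := by
    show (0:ℝ) < ((Fintype.card V : ℕ) : ℝ)
    exact_mod_cast Fintype.card_pos
  rcases Finset.eq_empty_or_nonempty s with rfl | hsnon
  · simp only [Finset.card_empty, Nat.cast_zero]
    apply div_nonneg _ hk.le
    have : (0:ℝ) ≤ -lam := by linarith
    exact mul_nonneg hn.le this
  set a : ℝ := (s.card : ℝ) with hadef
  have ha : 0 < a := by
    show (0:ℝ) < ((s.card : ℕ) : ℝ)
    exact_mod_cast Finset.card_pos.mpr hsnon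
  -- the test vector
  set χ : V → ℝ := fun w => if w ∈ s then 1 else 0 with hχdef
  set x : V → ℝ := fun w => n * χ w - a with hxdef
  have hrow : ∀ w, ∑ t, G.adjMatrix ℝ w t = (k:ℝ) := by
    intro w
    have := SimpleGraph.adjMatrix_mulVec_const_apply_of_regular (α := ℝ) (a := (1:ℝ)) hreg (v := w)
    simpa [Matrix.mulVec, dotProduct] using this
  have hcol : ∀ t, ∑ w, G.adjMatrix ℝ w t = (k:ℝ) := by
    intro t
    rw [← hrow t]
    apply Finset.sum_congr rfl
    intro w _
    by_cases h : G.Adj w t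
    · simp [SimpleGraph.adjMatrix_apply, h, h.symm]
    · have h' : ¬ G.Adj t w := fun h2 => h h2.symm
      simp [SimpleGraph.adjMatrix_apply, h, h']
  have hχsum : ∑ w, χ w = a := by
    simp [hχdef, Finset.sum_ite_mem, hadef]
  -- S1 = 0
  have hS1 : ∑ w, ∑ t, G.adjMatrix ℝ w t * (χ w * χ t) = 0 := by
    apply Finset.sum_eq_zero
    intro w _
    apply Finset.sum_eq_zero
    intro t _
    by_cases hw : w ∈ s
    · by_cases ht : t ∈ s
      · simp [SimpleGraph.adjMatrix_apply, hs w hw t ht]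
      · simp [hχdef, ht]
    · simp [hχdef, hw]
  have hS2 : ∑ w, ∑ t, G.adjMatrix ℝ w t * χ w = (k:ℝ) * a := by
    have : ∀ w, ∑ t, G.adjMatrix ℝ w t * χ w = (k:ℝ) * χ w := by
      intro w
      rw [← Finset.sum_mul, hrow]
    rw [Finset.sum_congr rfl fun w _ => this w, ← Finset.mul_sum, hχsum]
  have hS3 : ∑ w, ∑ t, G.adjMatrix ℝ w t * χ t = (k:ℝ) * a := by
    rw [Finset.sum_comm]
    have : ∀ t, ∑ w, G.adjMatrix ℝ w t * χ t = (k:ℝ) * χ t := by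
      intro t
      rw [← Finset.sum_mul, hcol]
    rw [Finset.sum_congr rfl fun t _ => this t, ← Finset.mul_sum, hχsum]
  have hS4 : ∑ w, ∑ t, G.adjMatrix ℝ w t = (k:ℝ) * n := by
    rw [Finset.sum_congr rfl fun w _ => hrow w]
    simp [hndef, mul_comm]
  -- quadratic form value
  have hQ : x ⬝ᵥ (G.adjMatrix ℝ *ᵥ x) = -((k:ℝ) * n * a^2) := by
    have expand : x ⬝ᵥ (G.adjMatrix ℝ *ᵥ x) = ∑ w, ∑ t, G.adjMatrix ℝ w t * (x w * x t) := by
      simp only [dotProduct, Matrix.mulVec, Finset.mul_sum]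
      exact Finset.sum_congr rfl fun w _ => Finset.sum_congr rfl fun t _ => by ring
    rw [expand]
    have step : ∀ w, ∑ t, G.adjMatrix ℝ w t * (x w * x t) =
        n^2 * (∑ t, G.adjMatrix ℝ w t * (χ w * χ t))
        - n * a * (∑ t, G.adjMatrix ℝ w t * χ w)
        - n * a * (∑ t, G.adjMatrix ℝ w t * χ t)
        + a^2 * (∑ t, G.adjMatrix ℝ w t) := by
      intro w
      rw [Finset.mul_sum, Finset.mul_sum, Finset.mul_sum, Finset.mul_sum]
      rw [← Finset.sum_sub_distrib, ← Finset.sum_sub_distrib, ← Finset.sum_add_distrib]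
      apply Finset.sum_congr rfl
      intro t _
      simp only [hxdef]
      ring
    rw [Finset.sum_congr rfl fun w _ => step w]
    rw [show (∑ w, (n^2 * (∑ t, G.adjMatrix ℝ w t * (χ w * χ t))
        - n * a * (∑ t, G.adjMatrix ℝ w t * χ w)
        - n * a * (∑ t, G.adjMatrix ℝ w t * χ t)
        + a^2 * (∑ t, G.adjMatrix ℝ w t)))
      = n^2 * (∑ w, ∑ t, G.adjMatrix ℝ w t * (χ w * χ t))
        - n * a * (∑ w, ∑ t, G.adjMatrix ℝ w t * χ w)
        - n * a * (∑ w, ∑ t, G.adjMatrix ℝ w t * χ t)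
        + a^2 * (∑ w, ∑ t, G.adjMatrix ℝ w t) from by
          rw [Finset.mul_sum, Finset.mul_sum, Finset.mul_sum, Finset.mul_sum,
            ← Finset.sum_sub_distrib, ← Finset.sum_sub_distrib, ← Finset.sum_add_distrib]]
    rw [hS1, hS2, hS3, hS4]
    ring
  -- norm value
  have hnormx : x ⬝ᵥ x = n * a * (n - a) := by
    have : x ⬝ᵥ x = ∑ w, (n^2 * χ w - 2 * n * a * χ w + a^2) := by
      simp only [dotProduct]
      apply Finset.sum_congr rfl
      intro w _
      simp only [hxdef, hχdef]
      by_cases hw : w ∈ s <;> simp [hw] <;> ring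
    rw [this, Finset.sum_add_distrib, Finset.sum_sub_distrib, ← Finset.mul_sum,
      ← Finset.mul_sum, hχsum]
    simp [hndef]
    ring
  have hray := rayleigh_min (adjHerm G) x
  rw [hnormx, hQ, ← hlamdef] at hray
  rw [le_div_iff₀ hk]
  nlinarith [mul_pos hn ha, mul_pos (mul_pos hn ha) hn]
end

section
/- If G is a graph with a proper coloring into χ color classes, A its adjacency matrix, S the normalized weight-characteristic matrix of the color partition built from a positive eigenvector x of A (S_{v,i} = x(v)/‖x|_{V_i}‖ if v ∈ V_i, 0 otherwise), then B = SᵀAS has zero diagonal, S satisfies SᵀS = I, and the vector y with y(i) = ‖x|_{V_i}‖ is an eigenvector of B with eigenvalue λ_max(A). -/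
open Matrix Finset BigOperators Real

/-- properties of the normalized weight-characteristic matrix S of a proper
coloring built from a positive eigenvector x: SᵀS = I, B = SᵀAS has zero diagonal, and
y(i) = ‖x|_{V_i}‖ is an eigenvector of B with eigenvalue λ_max(A). -/
theorem stmt4 {V : Type*} [Fintype V] [DecidableEq V] (G : SimpleGraph V)
    [DecidableRel G.Adj]
    (χ : ℕ) (C : G.Coloring (Fin χ))
    (hne : ∀ i : Fin χ, ∃ v, C v = i)
    (x : V → ℝ) (hx : ∀ v, 0 < x v)
    (heig : (G.adjMatrix ℝ).mulVec x = lamMax (adjHerm G) • x)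
    (N : Fin χ → ℝ)
    (hN : ∀ i, N i = Real.sqrt (∑ v ∈ Finset.univ.filter (fun v => C v = i), (x v) ^ 2))
    (S : Matrix V (Fin χ) ℝ)
    (hS : ∀ v i, S v i = if C v = i then x v / N i else 0)
    (B : Matrix (Fin χ) (Fin χ) ℝ)
    (hB : B = Sᵀ * G.adjMatrix ℝ * S) :
    Sᵀ * S = 1 ∧ (∀ i, B i i = 0) ∧ B.mulVec N = lamMax (adjHerm G) • N := by

  set lam := lamMax (adjHerm G) with hlam
  have hNsq : ∀ i, N i ^ 2 = ∑ v ∈ Finset.univ.filter (fun v => C v = i), (x v) ^ 2 := by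
    intro i
    rw [hN i, Real.sq_sqrt (Finset.sum_nonneg fun v _ => sq_nonneg _)]
  have hNpos : ∀ i, 0 < N i := by
    intro i
    rw [hN i]
    apply Real.sqrt_pos.mpr
    obtain ⟨v, hv⟩ := hne i
    exact Finset.sum_pos' (fun w _ => sq_nonneg _)
      ⟨v, Finset.mem_filter.mpr ⟨Finset.mem_univ v, hv⟩, pow_pos (hx v) 2⟩
  have hSN : ∀ v, ∑ j, S v j * N j = x v := by
    intro v
    rw [Finset.sum_eq_single (C v)]
    · rw [hS, if_pos rfl, div_mul_cancel₀ _ (hNpos (C v)).ne']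
    · intro j _ hj; rw [hS, if_neg (Ne.symm hj), zero_mul]
    · simp
  have hSmul : S.mulVec N = x := funext fun v => hSN v
  have hSTx : Sᵀ.mulVec x = N := by
    funext i
    simp only [Matrix.mulVec, dotProduct, Matrix.transpose_apply]
    have key : ∀ v, S v i * x v = if C v = i then x v ^ 2 / N i else 0 := by
      intro v; rw [hS]; split_ifs
      · ring
      · ring
    rw [Finset.sum_congr rfl fun v _ => key v, ← Finset.sum_filter, ← Finset.sum_div, ← hNsq,
      pow_two, mul_div_assoc, div_self (hNpos i).ne', mul_one]
  refine ⟨?_, ?_, ?_⟩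
  · ext i j
    simp only [Matrix.mul_apply, Matrix.transpose_apply]
    by_cases hij : i = j
    · subst hij
      rw [Matrix.one_apply_eq]
      have key : ∀ v, S v i * S v i = if C v = i then x v ^ 2 / N i ^ 2 else 0 := by
        intro v; rw [hS]; split_ifs
        · rw [div_mul_div_comm, ← pow_two, ← pow_two]
        · ring
      rw [Finset.sum_congr rfl fun v _ => key v, ← Finset.sum_filter, ← Finset.sum_div, ← hNsq,
        div_self (pow_ne_zero _ (hNpos i).ne')]
    · rw [Matrix.one_apply_ne hij]
      apply Finset.sum_eq_zero
      intro v _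
      rw [hS, hS]
      split_ifs with ha hb
      · exact absurd (ha.symm.trans hb) hij
      · rw [mul_zero]
      · rw [zero_mul]
      · rw [zero_mul]
  · intro i
    rw [hB]
    simp only [Matrix.mul_apply, Matrix.transpose_apply]
    apply Finset.sum_eq_zero
    intro u _
    by_cases hu : C u = i
    · apply mul_eq_zero_of_left
      apply Finset.sum_eq_zero
      intro v _
      by_cases hv : C v = i
      · apply mul_eq_zero_of_right
        rw [SimpleGraph.adjMatrix_apply, if_neg]
        intro hadj
        exact C.valid hadj (hv.trans hu.symm)
      · rw [hS, if_neg hv, zero_mul]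
    · rw [hS, if_neg hu, mul_zero]
  · rw [hB, ← Matrix.mulVec_mulVec, ← Matrix.mulVec_mulVec, hSmul, heig, Matrix.mulVec_smul, hSTx]
end

section
/- Interlacing proof of the Hoffman bound: if B is a symmetric χ×χ real matrix with zero trace whose eigenvalues interlace those of a symmetric matrix A and whose largest eigenvalue equals λ_max(A), then 0 = tr(B) ≥ λ_max(A) + (χ-1)·λ_min(A), hence χ ≥ 1 - λ_max(A)/λ_min(A) whenever λ_min(A) < 0. -/
open Matrix Finset BigOperators Real

/-- interlacing proof of the Hoffman bound: if B is a symmetric χ×χ real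
matrix with zero trace whose (decreasingly ordered) eigenvalues interlace those of a
symmetric n×n matrix A and whose largest eigenvalue equals λ_max(A), then
0 = tr(B) ≥ λ_max(A) + (χ-1)λ_min(A), hence χ ≥ 1 - λ_max(A)/λ_min(A) if λ_min(A) < 0. -/
theorem stmt5 {n χ : ℕ} (hn : 1 ≤ n) (hχn : 1 ≤ χ) (hle : χ ≤ n)
    (A : Matrix (Fin n) (Fin n) ℝ) (hA : A.IsHermitian)
    (B : Matrix (Fin χ) (Fin χ) ℝ) (hB : B.IsHermitian)
    (a : Fin n → ℝ) (ha_sort : ∀ i j : Fin n, i ≤ j → a j ≤ a i)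
    (σ : Equiv.Perm (Fin n)) (ha_eig : a = hA.eigenvalues ∘ σ)
    (b : Fin χ → ℝ) (hb_sort : ∀ i j : Fin χ, i ≤ j → b j ≤ b i)
    (τ : Equiv.Perm (Fin χ)) (hb_eig : b = hB.eigenvalues ∘ τ)
    (htr : B.trace = 0)
    (hinterlace : ∀ i : Fin χ,
      b i ≤ a ⟨i, lt_of_lt_of_le i.2 hle⟩ ∧
      a ⟨n - χ + i, by omega⟩ ≤ b i)
    (htop : b ⟨0, hχn⟩ = a ⟨0, hn⟩) :
    (0 : ℝ) ≥ a ⟨0, hn⟩ + ((χ : ℝ) - 1) * a ⟨n - 1, by omega⟩ ∧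
    (a ⟨n - 1, by omega⟩ < 0 →
      (χ : ℝ) ≥ 1 - a ⟨0, hn⟩ / a ⟨n - 1, by omega⟩) := by
  have hχn' : 0 < χ := hχn
  set m : ℝ := a ⟨n - 1, by omega⟩ with hm
  set a0 : ℝ := a ⟨0, hn⟩ with ha0
  -- sum of b equals 0
  have hsum : ∑ i, b i = 0 := by
    have h1 : ∑ i, b i = ∑ i, hB.eigenvalues (τ i) := by
      simp [hb_eig]
    rw [h1, Equiv.sum_comp τ hB.eigenvalues]
    have hspec := hB.spectral_theorem
    have : B.trace = ∑ i, hB.eigenvalues i := by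
      rw [hB.trace_eq_sum_eigenvalues]
      simp
    rw [htr] at this
    exact this.symm
  -- each b i ≥ m
  have hbm : ∀ i : Fin χ, m ≤ b i := by
    intro i
    refine le_trans ?_ (hinterlace i).2
    exact ha_sort ⟨n - χ + i, by omega⟩ ⟨n - 1, by omega⟩ (by simp [Fin.le_def]; omega)
  have hkey : a0 + ((χ : ℝ) - 1) * m ≤ 0 := by
    have h0 : (⟨0, hχn⟩ : Fin χ) ∈ (univ : Finset (Fin χ)) := mem_univ _
    have hsplit := Finset.add_sum_erase univ b h0
    have hrest : ((univ.erase (⟨0, hχn⟩ : Fin χ)).card : ℝ) * m ≤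
        ∑ i ∈ univ.erase (⟨0, hχn⟩ : Fin χ), b i := by
      have := Finset.card_nsmul_le_sum (univ.erase (⟨0, hχn⟩ : Fin χ)) b m
        (fun i _ => hbm i)
      simpa [nsmul_eq_mul] using this
    have hcard : ((univ.erase (⟨0, hχn⟩ : Fin χ)).card : ℝ) = (χ : ℝ) - 1 := by
      rw [Finset.card_erase_of_mem h0]
      simp
      push_cast [Nat.cast_sub hχn]
      ring
    rw [hcard] at hrest
    have : a0 + ((χ : ℝ) - 1) * m ≤ b ⟨0, hχn⟩ + ∑ i ∈ univ.erase (⟨0, hχn⟩ : Fin χ), b i := by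
      rw [htop]
      linarith
    rw [hsplit, hsum] at this
    exact this
  constructor
  · linarith
  · intro hmin
    have hmne : m ≠ 0 := ne_of_lt hmin
    have hdm : a0 / m * m = a0 := div_mul_cancel₀ _ hmne
    nlinarith [hkey, hmin, hdm]
end

section
/- Decomposition Theorem, part (iii): let G be a Hoffman colorable graph with Hoffman coloring V(G) = V_1 ⊔ … ⊔ V_χ and positive eigenvector x, and suppose every color class V_i satisfies the weight-regularity property that for all i ≠ j and all u ∈ V_i, (-λ_min(G))·x(u) = Σ_{v ∈ N(u) ∩ V_j} x(v). Then for any subset C of colors with |C| ≥ 2, the restriction of x to H = G[∪_{i∈C} V_i] is an eigenvector of H with eigenvalue (|C|-1)·(-λ_min(G)). -/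
open Matrix Finset BigOperators Real

/-- Decomposition Theorem, part (iii): for a Hoffman coloring with
positive eigenvector x satisfying the weight-regularity property, the restriction of x to
the union of color classes indexed by a subset C' (|C'| ≥ 2) is an eigenvector of the
induced subgraph with eigenvalue (|C'|-1)·(-λ_min(G)). -/
theorem stmt6 {V : Type*} [Fintype V] [DecidableEq V] (G : SimpleGraph V)
    [DecidableRel G.Adj]
    (χ : ℕ) (C : G.Coloring (Fin χ))
    (hχ : G.chromaticNumber = χ)
    (hHoff : (χ : ℝ) = 1 - lamMax (adjHerm G) / lamMin (adjHerm G))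
    (hmax : 0 < lamMax (adjHerm G)) (hmin : lamMin (adjHerm G) < 0)
    (x : V → ℝ) (hx : ∀ v, 0 < x v)
    (heig : (G.adjMatrix ℝ).mulVec x = lamMax (adjHerm G) • x)
    (hwr : ∀ i j : Fin χ, i ≠ j → ∀ u, C u = i →
      (-(lamMin (adjHerm G))) * x u =
        ∑ v ∈ Finset.univ.filter (fun v => G.Adj u v ∧ C v = j), x v)
    (C' : Finset (Fin χ)) (hC' : 2 ≤ C'.card) :
    ∀ u, C u ∈ C' →
      ∑ v ∈ Finset.univ.filter (fun v => G.Adj u v ∧ C v ∈ C'), x v =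
        ((C'.card : ℝ) - 1) * (-(lamMin (adjHerm G))) * x u := by
  intro u hu
  have hsplit : Finset.univ.filter (fun v => G.Adj u v ∧ C v ∈ C') =
      (C'.erase (C u)).biUnion (fun j => Finset.univ.filter (fun v => G.Adj u v ∧ C v = j)) := by
    ext v
    simp only [Finset.mem_filter, Finset.mem_biUnion, Finset.mem_erase, Finset.mem_univ,
      true_and]
    constructor
    · rintro ⟨hadj, hmem⟩
      exact ⟨C v, ⟨fun h => C.valid hadj h.symm, hmem⟩, hadj, rfl⟩
    · rintro ⟨j, ⟨hj, hjC⟩, hadj, rfl⟩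
      exact ⟨hadj, hjC⟩
  rw [hsplit, Finset.sum_biUnion]
  · have : ∀ j ∈ C'.erase (C u),
        ∑ v ∈ Finset.univ.filter (fun v => G.Adj u v ∧ C v = j), x v
          = (-(lamMin (adjHerm G))) * x u := by
      intro j hj
      exact (hwr (C u) j (fun h => (Finset.mem_erase.mp hj).1 h.symm) u rfl).symm
    rw [Finset.sum_congr rfl this, Finset.sum_const, nsmul_eq_mul,
      Finset.card_erase_of_mem hu]
    have hc : ((C'.card - 1 : ℕ) : ℝ) = (C'.card : ℝ) - 1 := by
      have : 1 ≤ C'.card := le_trans one_le_two hC'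
      push_cast [this]
      ring
    rw [hc, mul_assoc]
  · intro a _ b _ hab
    simp only [Finset.disjoint_left, Finset.mem_filter]
    rintro v ⟨_, _, rfl⟩ ⟨_, _, h⟩
    exact hab h
end

section
/- In a Hoffman coloring of a connected graph G with χ(G) ≥ 2, any color class consisting of a single vertex must be a universal vertex (adjacent to all other vertices of G). -/
open Matrix Finset BigOperators Real

section Spec
variable {n : Type*} [Fintype n] [DecidableEq n] {A : Matrix n n ℝ} (hA : A.IsHermitian)

noncomputable def Uu : Matrix n n ℝ := (hA.eigenvectorUnitary : Matrix n n ℝ)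

lemma Uu_mul_star : Uu hA * star (Uu hA) = 1 :=
  (Unitary.mem_iff.mp hA.eigenvectorUnitary.prop).2

lemma Uu_star_mul : star (Uu hA) * Uu hA = 1 :=
  (Unitary.mem_iff.mp hA.eigenvectorUnitary.prop).1

lemma star_Uu_transpose : star (Uu hA) = (Uu hA)ᵀ := by
  rw [← conjTranspose_eq_transpose_of_trivial]; rfl

lemma specNorm (z : n → ℝ) :
    z ⬝ᵥ z = ∑ i, ((star (Uu hA) *ᵥ z) i)^2 := by
  have : (star (Uu hA) *ᵥ z) ⬝ᵥ (star (Uu hA) *ᵥ z) = z ⬝ᵥ z := by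
    have ht : (star (Uu hA))ᵀ = Uu hA := by
      rw [star_Uu_transpose hA, transpose_transpose]
    rw [dotProduct_mulVec, ← mulVec_transpose, ht, mulVec_mulVec,
      Uu_mul_star hA, one_mulVec]
  rw [← this, dotProduct]
  exact Finset.sum_congr rfl fun i _ => (sq _).symm

lemma specQuad (z : n → ℝ) :
    z ⬝ᵥ (A *ᵥ z) = ∑ i, hA.eigenvalues i * ((star (Uu hA) *ᵥ z) i)^2 := by
  have hsp := hA.spectral_theorem
  have hA' : A *ᵥ z = Uu hA *ᵥ (diagonal hA.eigenvalues *ᵥ (star (Uu hA) *ᵥ z)) := by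
    conv_lhs => rw [hsp]
    have : (RCLike.ofReal ∘ hA.eigenvalues : n → ℝ) = hA.eigenvalues := by
      ext i; simp
    rw [Unitary.conjStarAlgAut_apply, this, ← mulVec_mulVec, ← mulVec_mulVec]
    rfl
  rw [hA', dotProduct_mulVec, ← mulVec_transpose, ← star_Uu_transpose hA]
  rw [dotProduct]
  refine Finset.sum_congr rfl fun i _ => ?_
  rw [mulVec_diagonal]
  ring

lemma specRecover (z : n → ℝ) (μ : ℝ)
    (h : ∀ i, hA.eigenvalues i * ((star (Uu hA) *ᵥ z) i) = μ * ((star (Uu hA) *ᵥ z) i)) :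
    A *ᵥ z = μ • z := by
  have hA' : A *ᵥ z = Uu hA *ᵥ (diagonal hA.eigenvalues *ᵥ (star (Uu hA) *ᵥ z)) := by
    conv_lhs => rw [hA.spectral_theorem]
    have : (RCLike.ofReal ∘ hA.eigenvalues : n → ℝ) = hA.eigenvalues := by
      ext i; simp
    rw [Unitary.conjStarAlgAut_apply, this, ← mulVec_mulVec, ← mulVec_mulVec]
    rfl
  have hd : diagonal hA.eigenvalues *ᵥ (star (Uu hA) *ᵥ z) = μ • (star (Uu hA) *ᵥ z) := by
    ext i; rw [mulVec_diagonal]; exact (h i).trans rfl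
  rw [hA', hd, mulVec_smul, mulVec_mulVec, Uu_mul_star hA, one_mulVec]

variable [Nonempty n]

lemma lamMin_le (i : n) : lamMin hA ≤ hA.eigenvalues i :=
  ciInf_le (Finite.bddBelow_range _) i

lemma le_lamMax (i : n) : hA.eigenvalues i ≤ lamMax hA :=
  le_ciSup (Finite.bddAbove_range _) i

lemma rayleigh_min_s9 (z : n → ℝ) : lamMin hA * (z ⬝ᵥ z) ≤ z ⬝ᵥ (A *ᵥ z) := by
  rw [specQuad hA, specNorm hA, Finset.mul_sum]
  exact Finset.sum_le_sum fun i _ =>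
    mul_le_mul_of_nonneg_right (lamMin_le hA i) (sq_nonneg _)

lemma rayleigh_max (z : n → ℝ) : z ⬝ᵥ (A *ᵥ z) ≤ lamMax hA * (z ⬝ᵥ z) := by
  rw [specQuad hA, specNorm hA, Finset.mul_sum]
  exact Finset.sum_le_sum fun i _ =>
    mul_le_mul_of_nonneg_right (le_lamMax hA i) (sq_nonneg _)

lemma rayleigh_min_eq (z : n → ℝ) (h : z ⬝ᵥ (A *ᵥ z) = lamMin hA * (z ⬝ᵥ z)) :
    A *ᵥ z = lamMin hA • z := by
  apply specRecover hA z (lamMin hA)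
  have h0 : ∑ i, (hA.eigenvalues i - lamMin hA) * ((star (Uu hA) *ᵥ z) i)^2 = 0 := by
    have := h
    rw [specQuad hA, specNorm hA, Finset.mul_sum] at this
    simp only [sub_mul]
    rw [Finset.sum_sub_distrib, this, sub_self]
  have hz : ∀ i ∈ Finset.univ, (hA.eigenvalues i - lamMin hA) * ((star (Uu hA) *ᵥ z) i)^2 = 0 :=
    (Finset.sum_eq_zero_iff_of_nonneg fun i _ =>
      mul_nonneg (sub_nonneg.mpr (lamMin_le hA i)) (sq_nonneg _)).mp h0
  intro i
  have := hz i (Finset.mem_univ i)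
  rcases mul_eq_zero.mp this with h1 | h2
  · nlinarith [sub_eq_zero.mp h1]
  · have : (star (Uu hA) *ᵥ z) i = 0 := pow_eq_zero_iff (by norm_num) |>.mp h2
    rw [this]; ring

lemma rayleigh_max_eq (z : n → ℝ) (h : z ⬝ᵥ (A *ᵥ z) = lamMax hA * (z ⬝ᵥ z)) :
    A *ᵥ z = lamMax hA • z := by
  apply specRecover hA z (lamMax hA)
  have h0 : ∑ i, (lamMax hA - hA.eigenvalues i) * ((star (Uu hA) *ᵥ z) i)^2 = 0 := by
    have := h
    rw [specQuad hA, specNorm hA, Finset.mul_sum] at this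
    simp only [sub_mul]
    rw [Finset.sum_sub_distrib, this, sub_self]
  have hz : ∀ i ∈ Finset.univ, (lamMax hA - hA.eigenvalues i) * ((star (Uu hA) *ᵥ z) i)^2 = 0 :=
    (Finset.sum_eq_zero_iff_of_nonneg fun i _ =>
      mul_nonneg (sub_nonneg.mpr (le_lamMax hA i)) (sq_nonneg _)).mp h0
  intro i
  have := hz i (Finset.mem_univ i)
  rcases mul_eq_zero.mp this with h1 | h2
  · nlinarith [sub_eq_zero.mp h1]
  · have : (star (Uu hA) *ᵥ z) i = 0 := pow_eq_zero_iff (by norm_num) |>.mp h2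
    rw [this]; ring

lemma exists_lamMax_eigenvector : ∃ x : n → ℝ, x ≠ 0 ∧ A *ᵥ x = lamMax hA • x := by
  obtain ⟨i, hi⟩ := exists_eq_ciSup_of_finite (f := hA.eigenvalues)
  refine ⟨⇑(hA.eigenvectorBasis i), ?_, ?_⟩
  · have := (hA.eigenvectorBasis).toBasis.ne_zero i
    intro h; apply this; ext j; simpa using congrFun h j
  · rw [hA.mulVec_eigenvectorBasis i, hi]; rfl

end Spec

lemma adjPerron {V : Type*} [Fintype V] [DecidableEq V] (G : SimpleGraph V)
    [DecidableRel G.Adj] (hconn : G.Connected) :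
    ∃ x : V → ℝ, (∀ i, 0 < x i) ∧ (G.adjMatrix ℝ) *ᵥ x = lamMax (adjHerm G) • x := by
  haveI : Nonempty V := hconn.nonempty
  obtain ⟨x0, hx0ne, hx0⟩ := exists_lamMax_eigenvector (adjHerm G)
  set A := G.adjMatrix ℝ with hAdef
  set l := lamMax (adjHerm G) with hldef
  set x : V → ℝ := fun i => |x0 i| with hxdef
  have hnn : ∀ i, 0 ≤ x i := fun i => abs_nonneg _
  have hAnn : ∀ i j, 0 ≤ A i j := by
    intro i j; rw [hAdef]; simp [SimpleGraph.adjMatrix_apply]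
    split <;> norm_num
  have hxx : x ⬝ᵥ x = x0 ⬝ᵥ x0 := by
    simp only [dotProduct, hxdef, abs_mul_abs_self]
  have hQ0 : x0 ⬝ᵥ (A *ᵥ x0) = l * (x0 ⬝ᵥ x0) := by
    rw [hx0, dotProduct_smul]; rfl
  have hQle : x0 ⬝ᵥ (A *ᵥ x0) ≤ x ⬝ᵥ (A *ᵥ x) := by
    simp only [dotProduct, mulVec]
    refine Finset.sum_le_sum fun i _ => ?_
    rw [Finset.mul_sum, Finset.mul_sum]
    refine Finset.sum_le_sum fun j _ => ?_
    have h1 : x0 i * (A i j * x0 j) ≤ |x0 i * (A i j * x0 j)| := le_abs_self _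
    have h2 : |x0 i * (A i j * x0 j)| = x i * (A i j * x j) := by
      rw [abs_mul, abs_mul, abs_of_nonneg (hAnn i j)]
    linarith
  have hQx : x ⬝ᵥ (A *ᵥ x) = l * (x ⬝ᵥ x) := by
    have hub := rayleigh_max (adjHerm G) x
    rw [← hldef] at hub
    have : l * (x ⬝ᵥ x) = x0 ⬝ᵥ (A *ᵥ x0) := by rw [hxx, hQ0]
    linarith
  have heig : A *ᵥ x = l • x := rayleigh_max_eq (adjHerm G) x hQx
  refine ⟨x, ?_, heig⟩
  by_contra hnot
  push_neg at hnot
  obtain ⟨w, hw⟩ := hnot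
  have hw0 : x w = 0 := le_antisymm hw (hnn w)
  -- zero propagates along edges
  have hprop : ∀ i, x i = 0 → ∀ j, G.Adj i j → x j = 0 := by
    intro i hi j hij
    have h1 : (A *ᵥ x) i = 0 := by rw [heig]; simp [hi]
    have h2 : (A *ᵥ x) i = ∑ j, A i j * x j := by simp [mulVec, dotProduct]
    have h3 : ∀ j ∈ Finset.univ, 0 ≤ A i j * x j :=
      fun j _ => mul_nonneg (hAnn i j) (hnn j)
    have h4 := (Finset.sum_eq_zero_iff_of_nonneg h3).mp (h2 ▸ h1) j (Finset.mem_univ j)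
    have hA1 : A i j = 1 := by rw [hAdef]; simp [SimpleGraph.adjMatrix_apply, hij]
    rw [hA1, one_mul] at h4
    exact h4
  have key : ∀ (a b : V) (p : G.Walk a b), x a = 0 → x b = 0 := by
    intro a b p
    induction p with
    | nil => exact id
    | cons h _ ih => exact fun ha => ih (hprop _ ha _ h)
  have hall : ∀ j, x j = 0 := fun j => key w j (hconn.preconnected w j).some hw0
  exact hx0ne (funext fun i => abs_eq_zero.mp (hall i))

/-- in a Hoffman coloring of a connected graph G with χ(G) ≥ 2, a color
class consisting of a single vertex is a universal vertex. -/
theorem stmt9 {V : Type*} [Fintype V] [DecidableEq V] (G : SimpleGraph V)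
    [DecidableRel G.Adj]
    (hconn : G.Connected)
    (χ : ℕ) (hχ2 : 2 ≤ χ) (hχ : G.chromaticNumber = χ)
    (hHoff : (χ : ℝ) = 1 - lamMax (adjHerm G) / lamMin (adjHerm G))
    (C : G.Coloring (Fin χ)) (v : V)
    (hsingle : ∀ u, C u = C v → u = v) :
    ∀ u, u ≠ v → G.Adj v u := by
  haveI : Nonempty V := hconn.nonempty
  set A := G.adjMatrix ℝ with hAdef
  set l1 := lamMax (adjHerm G) with hl1def
  set ln := lamMin (adjHerm G) with hlndef
  set k : ℝ := (χ : ℝ) with hkdef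
  have hk2 : (2:ℝ) ≤ k := by rw [hkdef]; exact_mod_cast hχ2
  -- basic eigenvalue facts
  have hle : ln ≤ l1 := by
    obtain ⟨i⟩ := (inferInstance : Nonempty V)
    exact le_trans (lamMin_le (adjHerm G) i) (le_lamMax (adjHerm G) i)
  have hln_ne : ln ≠ 0 := by
    intro h
    rw [h, div_zero] at hHoff
    rw [hkdef] at hHoff  -- (χ:ℝ) = 1
    norm_num at hHoff
    omega
  have hln_neg : ln < 0 := by
    rcases lt_or_gt_of_ne hln_ne with h | h
    · exact h
    · exfalso
      have h1 : (1:ℝ) ≤ l1 / ln := (one_le_div h).mpr hle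
      nlinarith
  have hl1eq : l1 = (1 - k) * ln := by
    have : l1 / ln = 1 - k := by linarith
    field_simp at this
    linarith
  have hl1pos : 0 < l1 := by nlinarith
  have hgap : ln < l1 := lt_trans hln_neg hl1pos
  -- Perron vector
  obtain ⟨x, hxpos, hx'⟩ := adjPerron G hconn
  have hx : A *ᵥ x = l1 • x := hx'
  have hQx : x ⬝ᵥ (A *ᵥ x) = l1 * (x ⬝ᵥ x) := by rw [hx, dotProduct_smul]; rfl
  -- the class vectors
  set z : Fin χ → V → ℝ := fun c i => if C i = c then (k-1) * x i else -(x i) with hzdef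
  -- Step B: sum of quadratic forms
  have hzsplit : ∀ c i, z c i = (if C i = c then k * x i else 0) - x i := by
    intro c i
    rw [hzdef]
    by_cases h : C i = c <;> simp [h] <;> ring
  have stepB : ∑ c, (z c) ⬝ᵥ (A *ᵥ (z c)) = -k * (x ⬝ᵥ (A *ᵥ x)) := by
    have expand : ∀ y : V → ℝ, y ⬝ᵥ (A *ᵥ y) = ∑ i, ∑ j, A i j * (y i * y j) := by
      intro y
      simp only [dotProduct, mulVec, Finset.mul_sum]
      exact Finset.sum_congr rfl fun i _ => Finset.sum_congr rfl fun j _ => by ring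
    calc ∑ c, (z c) ⬝ᵥ (A *ᵥ (z c))
        = ∑ c, ∑ i, ∑ j, A i j * (z c i * z c j) :=
          Finset.sum_congr rfl fun c _ => expand (z c)
      _ = ∑ i, ∑ j, ∑ c, A i j * (z c i * z c j) := by
          rw [Finset.sum_comm]
          exact Finset.sum_congr rfl fun i _ => Finset.sum_comm
      _ = ∑ i, ∑ j, A i j * (-k * (x i * x j)) := by
          refine Finset.sum_congr rfl fun i _ => Finset.sum_congr rfl fun j _ => ?_
          rw [← Finset.mul_sum]
          by_cases hadj : G.Adj i j
          · congr 1
            have hC : C i ≠ C j := C.valid hadj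
            have : ∀ c, z c i * z c j =
                (if C i = c then k * x i else 0) * (if C j = c then k * x j else 0)
                - (if C i = c then k * x i else 0) * x j
                - x i * (if C j = c then k * x j else 0) + x i * x j := by
              intro c
              rw [hzsplit c i, hzsplit c j]
              ring
            simp only [this]
            have e1 : ∑ c, (if C i = c then k * x i else 0) * (if C j = c then k * x j else 0)
                = 0 := by
              refine Finset.sum_eq_zero fun c _ => ?_
              by_cases h1 : C i = c
              · have h2 : C j ≠ c := fun h => hC (h1.trans h.symm)
                simp [h2]
              · simp [h1]
            have e2 : ∑ c, (if C i = c then k * x i else 0) * x j = k * x i * x j := by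
              rw [← Finset.sum_mul]
              rw [Finset.sum_ite_eq]
              simp
            have e3 : ∑ c, x i * (if C j = c then k * x j else 0) = x i * (k * x j) := by
              rw [← Finset.mul_sum, Finset.sum_ite_eq]
              simp
            have e4 : ∑ (_ : Fin χ), x i * x j = k * (x i * x j) := by
              rw [Finset.sum_const, Finset.card_univ, Fintype.card_fin, hkdef]
              simp [nsmul_eq_mul]
            rw [Finset.sum_add_distrib, Finset.sum_sub_distrib, Finset.sum_sub_distrib,
              e1, e2, e3, e4]
            ring
          · have hA0 : A i j = 0 := by rw [hAdef]; simp [SimpleGraph.adjMatrix_apply, hadj]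
            rw [hA0]; ring
      _ = -k * (x ⬝ᵥ (A *ᵥ x)) := by
          rw [expand x, Finset.mul_sum]
          refine Finset.sum_congr rfl fun i _ => ?_
          rw [Finset.mul_sum]
          exact Finset.sum_congr rfl fun j _ => by ring
  -- Step C: sum of norms
  have stepC : ∑ c, (z c) ⬝ᵥ (z c) = (k * (k-1)) * (x ⬝ᵥ x) := by
    calc ∑ c, (z c) ⬝ᵥ (z c) = ∑ c, ∑ i, z c i * z c i := rfl
      _ = ∑ i, ∑ c, z c i * z c i := Finset.sum_comm
      _ = ∑ i, (k * (k-1)) * (x i * x i) := by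
          refine Finset.sum_congr rfl fun i _ => ?_
          have : ∀ c, z c i * z c i =
              x i * x i + (if C i = c then ((k-1)^2 - 1) * (x i * x i) else 0) := by
            intro c
            rw [hzdef]
            by_cases h : C i = c <;> simp [h] <;> ring
          simp only [this]
          rw [Finset.sum_add_distrib, Finset.sum_const, Finset.sum_ite_eq]
          simp only [Finset.mem_univ, if_true, Finset.card_univ, Fintype.card_fin,
            nsmul_eq_mul]
          rw [← hkdef]
          ring
      _ = (k * (k-1)) * (x ⬝ᵥ x) := by
          rw [dotProduct, Finset.mul_sum]
  -- total equality forces each Rayleigh equality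
  have hterm0 : ∀ c ∈ Finset.univ, (z c) ⬝ᵥ (A *ᵥ (z c)) - ln * ((z c) ⬝ᵥ (z c)) = 0 := by
    apply (Finset.sum_eq_zero_iff_of_nonneg ?_).mp
    · rw [Finset.sum_sub_distrib, stepB, ← Finset.mul_sum, stepC, hQx, hl1eq]
      ring
    · intro c _
      have := rayleigh_min_s9 (adjHerm G) (z c)
      rw [← hlndef, ← hAdef] at this
      linarith
  have heq := hterm0 (C v) (Finset.mem_univ _)
  have heig : A *ᵥ z (C v) = ln • z (C v) := by
    apply rayleigh_min_eq (adjHerm G) (z (C v))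
    rw [← hlndef, ← hAdef]
    linarith
  -- final step
  intro u hu
  have hCu : C u ≠ C v := fun h => hu (hsingle u h)
  have hrow := congrFun heig u
  have hzv : ∀ j, z (C v) j = (if j = v then k * x v else 0) - x j := by
    intro j
    by_cases hj : j = v
    · subst hj; rw [hzsplit]; simp
    · have hCj : C j ≠ C v := fun h => hj (hsingle j h)
      rw [hzsplit]; simp [hCj, hj]
  have hlhs : (A *ᵥ z (C v)) u = A u v * (k * x v) - l1 * x u := by
    have h1 : (A *ᵥ z (C v)) u = ∑ j, A u j * z (C v) j := by
      simp [mulVec, dotProduct]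
    rw [h1]
    have h2 : ∀ j, A u j * z (C v) j
        = (if j = v then A u j * (k * x v) else 0) - A u j * x j := by
      intro j
      rw [hzv j]
      by_cases hj : j = v <;> simp [hj] <;> ring
    simp only [h2]
    rw [Finset.sum_sub_distrib, Finset.sum_ite_eq']
    have h3 : ∑ j, A u j * x j = l1 * x u := by
      have := congrFun hx u
      simpa [mulVec, dotProduct] using this
    rw [h3]
    simp
  have hrhs : (ln • z (C v)) u = -(ln * x u) := by
    simp only [Pi.smul_apply, smul_eq_mul]
    rw [hzv u]
    simp [hu]
  have hkey : A u v * (k * x v) = (l1 - ln) * x u := by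
    rw [hlhs, hrhs] at hrow
    linear_combination hrow
  have hpos : 0 < (l1 - ln) * x u := mul_pos (by linarith) (hxpos u)
  have hAuv : A u v ≠ 0 := by
    intro h0
    rw [h0] at hkey
    simp at hkey
    rcases hkey with h | h <;> nlinarith [hxpos u]
  have hadj : G.Adj u v := by
    by_contra h
    exact hAuv (by rw [hAdef]; simp [SimpleGraph.adjMatrix_apply, h])
  exact hadj.symm
end

section
/- Spectrum of the Hoffman-colorable k-cone: let G be a regular Hoffman colorable graph with χ(G) colors, λ_min(G) = -ν, and all color classes of size ν²/k. Let CG be the k-cone over G (G plus an independent set V_0 of size k joined completely to V(G)). Then Spec(CG) = {χ(G)ν, 0^{k-1}, -ν} ∪ Spec(G) \ {(χ(G)-1)ν} (as multisets), and consequently CG is Hoffman colorable with χ(CG) = χ(G)+1. -/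
open Matrix Finset BigOperators Real

attribute [local instance] Classical.propDecidable

/-- The k-cone graph over G: G together with an independent set of k new vertices,
each adjacent to every vertex of G. -/
def coneGraph {V : Type*} (G : SimpleGraph V) (k : ℕ) : SimpleGraph (V ⊕ Fin k) where
  Adj a b :=
    match a, b with
    | Sum.inl u, Sum.inl v => G.Adj u v
    | Sum.inl _, Sum.inr _ => True
    | Sum.inr _, Sum.inl _ => True
    | Sum.inr _, Sum.inr _ => False
  symm := ⟨by rintro (u|i) (v|j) h <;> first | exact G.adj_symm h | trivial⟩
  loopless := ⟨by rintro (u|i) h <;> first | exact G.irrefl h | exact h⟩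

/-- The multiset of adjacency eigenvalues of a graph. -/
noncomputable def spec {V : Type*} [Fintype V] [DecidableEq V] (G : SimpleGraph V)
    [DecidableRel G.Adj] : Multiset ℝ :=
  Finset.univ.val.map (adjHerm G).eigenvalues


set_option synthInstance.maxHeartbeats 1000000
set_option maxHeartbeats 1000000

section AuxSpectral
open Polynomial

variable {n : Type*} [Fintype n] [DecidableEq n]

lemma aux_charpoly_conj_unit {R : Type*} [CommRing R] (U D W : Matrix n n R)
    (h1 : U * W = 1) (h2 : W * U = 1) : (U * D * W).charpoly = D.charpoly := by
  have key : charmatrix (U * D * W) = U.map C * charmatrix D * W.map C := by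
    unfold charmatrix
    rw [Matrix.mul_sub, Matrix.sub_mul]
    congr 1
    · rw [scalar_apply, ← Matrix.smul_one_eq_diagonal, Matrix.mul_smul, Matrix.mul_one,
        Matrix.smul_mul, ← Matrix.map_mul, h1, Matrix.map_one _ (map_zero C) (map_one C)]
    · show ((U * D * W).map C : Matrix n n R[X]) = (U.map C * D.map C) * W.map C
      rw [← Matrix.map_mul, ← Matrix.map_mul]
  unfold Matrix.charpoly
  rw [key, det_mul, det_mul, mul_comm, ← mul_assoc, ← det_mul, ← Matrix.map_mul, h2,
    Matrix.map_one _ (map_zero C) (map_one C)]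
  simp

lemma aux_charpoly_diagonal {R : Type*} [CommRing R] (v : n → R) :
    (Matrix.diagonal v).charpoly = ∏ i, (X - C (v i)) := by
  unfold Matrix.charpoly
  have : charmatrix (Matrix.diagonal v) = Matrix.diagonal (fun i => X - C (v i)) := by
    refine Matrix.ext fun i j => ?_
    by_cases h : i = j
    · subst h; simp [charmatrix_apply_eq]
    · simp [charmatrix_apply_ne _ _ _ h, Matrix.diagonal_apply_ne _ h]
  rw [this, det_diagonal]

lemma aux_charpoly_hermitian {A : Matrix n n ℝ} (hA : A.IsHermitian) :
    A.charpoly = ∏ i, (X - C (hA.eigenvalues i)) := by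
  have hU := hA.eigenvectorUnitary.2
  rw [Unitary.mem_iff] at hU
  conv_lhs => rw [hA.spectral_theorem, Unitary.conjStarAlgAut_apply]
  rw [aux_charpoly_conj_unit _ _ _ hU.2 hU.1]
  have : (RCLike.ofReal ∘ hA.eigenvalues : n → ℝ) = hA.eigenvalues := by
    ext i; simp
  rw [this, aux_charpoly_diagonal]

lemma aux_roots_charpoly_hermitian {A : Matrix n n ℝ} (hA : A.IsHermitian) :
    A.charpoly.roots = Finset.univ.val.map hA.eigenvalues := by
  rw [aux_charpoly_hermitian hA, Polynomial.roots_prod]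
  · simp only [roots_X_sub_C, Multiset.bind_singleton]
  · exact Finset.prod_ne_zero_iff.mpr fun i _ => X_sub_C_ne_zero _

lemma aux_trace_eq_sum_eigenvalues {A : Matrix n n ℝ} (hA : A.IsHermitian) :
    A.trace = ∑ i, hA.eigenvalues i := by
  have hU := hA.eigenvectorUnitary.2
  rw [Unitary.mem_iff] at hU
  conv_lhs => rw [hA.spectral_theorem, Unitary.conjStarAlgAut_apply]
  rw [Matrix.trace_mul_cycle, hU.1, Matrix.one_mul, Matrix.trace_diagonal]
  simp

end AuxSpectral

noncomputable section AuxRatFunc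
open Polynomial

abbrev auxFF := RatFunc ℝ
def auxψ : ℝ[X] →+* auxFF := algebraMap ℝ[X] (RatFunc ℝ)
def auxφ : ℝ →+* auxFF := auxψ.comp Polynomial.C
def auxx : auxFF := auxψ X

lemma auxψinj : Function.Injective auxψ := RatFunc.algebraMap_injective ℝ

lemma aux_cmEq {s : Type*} [Fintype s] [DecidableEq s] (B : Matrix s s ℝ) :
    auxψ B.charpoly = (auxx • (1 : Matrix s s auxFF) - B.map auxφ).det := by
  rw [Matrix.charpoly, RingHom.map_det]
  congr 1
  refine Matrix.ext fun i j => ?_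
  by_cases h : i = j
  · subst h
    simp [RingHom.mapMatrix_apply, Matrix.map_apply, charmatrix_apply_eq, Matrix.one_apply_eq,
      auxφ, auxx]
  · simp [RingHom.mapMatrix_apply, Matrix.map_apply, charmatrix_apply_ne _ _ _ h,
      Matrix.one_apply_ne h, auxφ]

lemma auxxne : auxx ≠ 0 := by
  intro h
  exact X_ne_zero (auxψinj (by simpa [auxx] using h))

lemma auxxdne (d : ℝ) : auxx - auxφ d ≠ 0 := by
  intro h
  have : auxψ (X - Polynomial.C d) = 0 := by
    rw [map_sub]; exact h
  exact X_sub_C_ne_zero d (auxψinj (by simpa using this))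

end AuxRatFunc

open Polynomial in
lemma aux_cone_charpoly_key {V : Type*} [Fintype V] [DecidableEq V] (k : ℕ) (hk : 1 ≤ k)
    (A : Matrix V V ℝ) (d : ℝ) (hrow : A *ᵥ (fun _ => (1:ℝ)) = fun _ => d)
    (M : Matrix (V ⊕ Fin k) (V ⊕ Fin k) ℝ)
    (hM : M = Matrix.fromBlocks A (Matrix.of fun _ _ => 1) (Matrix.of fun _ _ => 1) 0) :
    (X - C d) * M.charpoly =
      X ^ (k - 1) * ((X ^ 2 - C d * X - C ((k * Fintype.card V : ℕ) : ℝ)) * A.charpoly) := by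
  apply auxψinj
  rw [_root_.map_mul, _root_.map_mul, _root_.map_mul, map_sub, map_sub, map_sub, map_pow,
    map_pow, _root_.map_mul, aux_cmEq M, aux_cmEq A]
  set n : ℕ := Fintype.card V
  set x : auxFF := auxx with hxdef
  set B₀ : Matrix V V auxFF := x • 1 - A.map auxφ with hB₀
  have hdetB₀ : B₀.det = auxψ A.charpoly := (aux_cmEq A).symm
  have hB₀ne : B₀.det ≠ 0 := by
    rw [hdetB₀]
    exact fun h => (Matrix.charpoly_monic A).ne_zero (auxψinj (by simpa using h))
  have hB₀unit : IsUnit B₀.det := isUnit_iff_ne_zero.mpr hB₀ne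
  have hblock : (x • (1 : Matrix (V ⊕ Fin k) (V ⊕ Fin k) auxFF) - M.map auxφ) =
      Matrix.fromBlocks B₀ (Matrix.of fun _ _ => -1) (Matrix.of fun _ _ => -1) (x • 1) := by
    subst hM
    refine Matrix.ext fun i j => ?_
    rcases i with u | i <;> rcases j with v | j <;>
      simp [Matrix.fromBlocks, Matrix.one_apply, Matrix.sub_apply, Matrix.smul_apply,
        Matrix.map_apply, hB₀, auxφ]
  rw [hblock]
  letI instInv : Invertible (x • (1 : Matrix (Fin k) (Fin k) auxFF)) :=
    ⟨x⁻¹ • 1, by rw [smul_mul_smul_comm, inv_mul_cancel₀ auxxne, Matrix.one_mul, one_smul],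
      by rw [smul_mul_smul_comm, mul_inv_cancel₀ auxxne, Matrix.one_mul, one_smul]⟩
  rw [Matrix.det_fromBlocks₂₂]
  have hinvOf : (⅟(x • (1 : Matrix (Fin k) (Fin k) auxFF))) = x⁻¹ • 1 := rfl
  have hSchur : B₀ - (Matrix.of fun _ _ => (-1:auxFF) : Matrix V (Fin k) auxFF) *
      ⅟(x • (1 : Matrix (Fin k) (Fin k) auxFF)) *
      (Matrix.of fun _ _ => (-1:auxFF) : Matrix (Fin k) V auxFF) =
      B₀ + Matrix.replicateCol Unit (fun _ => (1:auxFF)) *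
        Matrix.replicateRow Unit (fun _ => -((k:auxFF) * x⁻¹)) := by
    rw [hinvOf]
    refine Matrix.ext fun u v => ?_
    simp [Matrix.mul_apply, Matrix.sub_apply, Matrix.add_apply, Matrix.replicateCol_apply,
      Matrix.replicateRow_apply, Matrix.one_apply, Finset.sum_ite_eq', mul_comm, sub_eq_add_neg]
  rw [hSchur, Matrix.det_add_replicateCol_mul_replicateRow hB₀unit]
  have hAone : (A.map auxφ) *ᵥ (fun _ => (1:auxFF)) = fun _ => auxφ d := by
    funext w
    have h1 := congrFun hrow w
    simp only [Matrix.mulVec, dotProduct, mul_one] at h1 ⊢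
    calc ∑ u, (A.map auxφ) w u = auxφ (∑ u, A w u) := by simp [Matrix.map_apply, map_sum]
      _ = auxφ d := by rw [h1]
  have hones : B₀ *ᵥ (fun _ => (1:auxFF)) = fun _ => (x - auxφ d) := by
    funext u
    rw [hB₀, Matrix.sub_mulVec, hAone]
    simp [Matrix.smul_mulVec, Matrix.one_mulVec]
  have hinv_ones : B₀⁻¹ *ᵥ (fun _ => (1:auxFF)) = fun _ => (x - auxφ d)⁻¹ := by
    have h1 : B₀⁻¹ *ᵥ (B₀ *ᵥ ((x - auxφ d)⁻¹ • fun _ => (1:auxFF))) =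
        (x - auxφ d)⁻¹ • fun _ => (1:auxFF) := by
      rw [Matrix.mulVec_mulVec, Matrix.nonsing_inv_mul _ hB₀unit, Matrix.one_mulVec]
    rw [Matrix.mulVec_smul, hones] at h1
    rw [show ((x - auxφ d)⁻¹ • fun _ : V => (x - auxφ d)) = fun _ : V => (1:auxFF) from
      funext fun u => by simp [inv_mul_cancel₀ (auxxdne d)]; exact inv_mul_cancel₀ (auxxdne d)] at h1
    rw [h1]
    funext u; simp
  have hdet1 : ((1:Matrix Unit Unit auxFF) + Matrix.replicateRow Unit (fun _ : V => -((k:auxFF) * x⁻¹)) *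
      B₀⁻¹ * Matrix.replicateCol Unit (fun _ : V => (1:auxFF))).det
      = 1 - (k:auxFF) * x⁻¹ * ((n:auxFF) * (x - auxφ d)⁻¹) := by
    rw [Matrix.det_unique]
    have hsumrow : ∀ p, ∑ q, B₀⁻¹ p q = (x - auxφ d)⁻¹ := by
      intro p
      have := congrFun hinv_ones p
      simpa [Matrix.mulVec, dotProduct] using this
    simp only [Matrix.add_apply, Matrix.one_apply_eq, Matrix.mul_apply, Matrix.replicateRow_apply,
      Matrix.replicateCol_apply, Finset.univ_unique, Finset.sum_singleton, mul_one]
    rw [Finset.sum_comm]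
    have hrowsum : ∀ p, ∑ q, -((k:auxFF) * x⁻¹) * B₀⁻¹ p q
        = -((k:auxFF) * x⁻¹) * (x - auxφ d)⁻¹ := fun p => by rw [← Finset.mul_sum, hsumrow p]
    rw [Finset.sum_congr rfl fun p _ => hrowsum p, Finset.sum_const, Finset.card_univ]
    show (1:auxFF) + (n:ℕ) • _ = _
    rw [nsmul_eq_mul]
    ring
  rw [hdet1, Matrix.det_smul, Matrix.det_one, Fintype.card_fin, hdetB₀]
  have hxk : (x:auxFF) ^ k = x ^ (k-1) * x := by
    conv_lhs => rw [← Nat.succ_pred_eq_of_pos hk]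
    rw [pow_succ, Nat.pred_eq_sub_one]
  have hCd : auxψ (Polynomial.C d) = auxφ d := rfl
  have hCkn : auxψ (Polynomial.C ((k * n : ℕ) : ℝ)) = (k:auxFF) * (n:auxFF) := by
    show auxφ ((k * n : ℕ) : ℝ) = _
    rw [map_natCast]
    push_cast
    ring
  rw [hCd, hCkn]
  have hx : auxψ X = x := rfl
  rw [hx, hxk]
  have h1 : x - auxφ d ≠ 0 := auxxdne d
  have hxne' : x ≠ 0 := by rw [hxdef]; exact auxxne
  have e1 : (x - auxφ d) * (1 - (k:auxFF) * x⁻¹ * ((n:auxFF) * (x - auxφ d)⁻¹)) =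
      x - auxφ d - (k:auxFF) * (n:auxFF) * x⁻¹ := by
    have h2 : (x - auxφ d) * ((k:auxFF) * x⁻¹ * ((n:auxFF) * (x - auxφ d)⁻¹)) =
        (k:auxFF)*(n:auxFF)*x⁻¹ := by
      rw [show (x - auxφ d) * ((k:auxFF) * x⁻¹ * ((n:auxFF) * (x - auxφ d)⁻¹)) =
        ((x - auxφ d) * (x - auxφ d)⁻¹) * ((k:auxFF)*(n:auxFF)*x⁻¹) from by ring,
        mul_inv_cancel₀ h1, one_mul]
    rw [mul_sub, mul_one, h2]
  have e2 : x * (x - auxφ d - (k:auxFF) * (n:auxFF) * x⁻¹) =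
      x^2 - auxφ d * x - (k:auxFF)*(n:auxFF) := by
    rw [show x * (x - auxφ d - (k:auxFF)*(n:auxFF)*x⁻¹) =
      x*x - auxφ d*x - (k:auxFF)*(n:auxFF)*(x*x⁻¹) from by ring, mul_inv_cancel₀ hxne']
    ring
  linear_combination (x ^ (k-1) * x * auxψ A.charpoly) * e1 + (x ^ (k-1) * auxψ A.charpoly) * e2

/-- spectrum of the Hoffman colorable k-cone. If G is a regular Hoffman
colorable graph with χ colors, ν = -λ_min(G) and color classes of size ν²/k, then
Spec(CG) = {χν, 0^{k-1}, -ν} ∪ Spec(G) \ {(χ-1)ν}, and CG is Hoffman colorable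
with χ(CG) = χ + 1. -/
theorem stmt10 {V : Type*} [Fintype V] [DecidableEq V] (G : SimpleGraph V)
    [DecidableRel G.Adj]
    (χ : ℕ) (C : G.Coloring (Fin χ))
    (hχ : G.chromaticNumber = χ)
    (hHoff : (χ : ℝ) = 1 - lamMax (adjHerm G) / lamMin (adjHerm G))
    (ν : ℝ) (hν : 0 < ν) (hmin : lamMin (adjHerm G) = -ν)
    (d : ℕ) (hreg : G.IsRegularOfDegree d) (hd : (d : ℝ) = ((χ : ℝ) - 1) * ν)
    (k : ℕ) (hk : 1 ≤ k)
    (m : ℕ) (hsize : ∀ i : Fin χ, ((Finset.univ.filter (fun v => C v = i)).card) = m)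
    (hm : (m : ℝ) * (k : ℝ) = ν ^ 2) :
    spec (coneGraph G k) =
      ((χ : ℝ) * ν) ::ₘ (-ν) ::ₘ
        (Multiset.replicate (k - 1) (0 : ℝ) + (spec G).erase (((χ : ℝ) - 1) * ν)) ∧
    (coneGraph G k).chromaticNumber = χ + 1 ∧
    ((χ : ℝ) + 1) = 1 - lamMax (adjHerm (coneGraph G k)) /
        lamMin (adjHerm (coneGraph G k)) := by
  -- basic setup
  haveI hVne : Nonempty V := by
    by_contra h
    rw [not_nonempty_iff] at h
    have h0 : lamMin (adjHerm G) = 0 := Real.iInf_of_isEmpty _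
    rw [hmin] at h0; linarith
  haveI hConeNe : Nonempty (V ⊕ Fin k) := ⟨Sum.inr ⟨0, hk⟩⟩
  have hχ1 : 1 ≤ χ := by
    have : Nonempty (Fin χ) := ⟨C (Classical.arbitrary V)⟩
    exact Fin.pos_iff_nonempty.mpr this
  have hbddA : BddAbove (Set.range (adjHerm G).eigenvalues) :=
    Set.Finite.bddAbove (Set.finite_range _)
  have hbddB : BddBelow (Set.range (adjHerm G).eigenvalues) :=
    Set.Finite.bddBelow (Set.finite_range _)
  have hle_max : ∀ i, (adjHerm G).eigenvalues i ≤ lamMax (adjHerm G) :=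
    fun i => le_ciSup hbddA i
  have hge_min : ∀ i, lamMin (adjHerm G) ≤ (adjHerm G).eigenvalues i :=
    fun i => ciInf_le hbddB i
  have hν' : ν ≠ 0 := ne_of_gt hν
  have hmax : lamMax (adjHerm G) = ((χ:ℝ) - 1) * ν := by
    rw [hmin] at hHoff
    have h1 : lamMax (adjHerm G) / (-ν) = 1 - (χ:ℝ) := by linarith
    have h2 : lamMax (adjHerm G) = (1 - (χ:ℝ)) * (-ν) :=
      (div_eq_iff (neg_ne_zero.mpr hν')).mp h1
    rw [h2]; ring
  have htrace : ∑ i, (adjHerm G).eigenvalues i = 0 := by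
    have h1 := aux_trace_eq_sum_eigenvalues (adjHerm G)
    rw [SimpleGraph.trace_adjMatrix] at h1
    exact h1.symm
  have hχ2 : 2 ≤ χ := by
    rcases Nat.lt_or_ge χ 2 with h | h
    · exfalso
      have hχeq : χ = 1 := by omega
      have hmax0 : lamMax (adjHerm G) = 0 := by rw [hmax, hχeq]; norm_num
      obtain ⟨i0, hi0⟩ := Finite.exists_min (adjHerm G).eigenvalues
      have hmin0 : (adjHerm G).eigenvalues i0 = -ν := by
        have heq : lamMin (adjHerm G) = (adjHerm G).eigenvalues i0 :=
          le_antisymm (ciInf_le hbddB i0) (le_ciInf hi0)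
        rw [← heq, hmin]
      have hsum : ∑ i, (adjHerm G).eigenvalues i < ∑ _i : V, (0:ℝ) := by
        refine Finset.sum_lt_sum (fun i _ => ?_) ⟨i0, Finset.mem_univ _, ?_⟩
        · rw [← hmax0]; exact hle_max i
        · rw [hmin0]; linarith
      rw [htrace, Finset.sum_const, smul_zero] at hsum
      exact lt_irrefl _ hsum
    · exact h
  -- counting
  have hn : Fintype.card V = χ * m := by
    have h1 := Finset.card_eq_sum_card_fiberwise
      (f := fun v => C v) (s := Finset.univ) (t := Finset.univ) (fun v _ => Finset.mem_univ _)
    rw [Finset.card_univ] at h1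
    rw [h1, Finset.sum_congr rfl (fun i _ => hsize i), Finset.sum_const, Finset.card_univ,
      Fintype.card_fin, smul_eq_mul]
  have hkn : ((k * Fintype.card V : ℕ) : ℝ) = (χ:ℝ) * ν^2 := by
    rw [hn, ← hm]
    push_cast
    ring
  -- the block structure of the cone adjacency matrix
  have hadj11 : ∀ u v, (coneGraph G k).Adj (Sum.inl u) (Sum.inl v) ↔ G.Adj u v :=
    fun _ _ => Iff.rfl
  have hM : (coneGraph G k).adjMatrix ℝ =
      Matrix.fromBlocks (G.adjMatrix ℝ) (Matrix.of fun _ _ => 1) (Matrix.of fun _ _ => 1) 0 := by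
    refine Matrix.ext fun i j => ?_
    rcases i with u | i <;> rcases j with v | j
    · by_cases h : G.Adj u v <;>
        simp [SimpleGraph.adjMatrix_apply, Matrix.fromBlocks, hadj11, h]
    · simp [SimpleGraph.adjMatrix_apply, Matrix.fromBlocks, show (coneGraph G k).Adj
        (Sum.inl u) (Sum.inr j) from trivial]
    · simp [SimpleGraph.adjMatrix_apply, Matrix.fromBlocks, show (coneGraph G k).Adj
        (Sum.inr i) (Sum.inl v) from trivial]
    · simp [SimpleGraph.adjMatrix_apply, Matrix.fromBlocks, show ¬ (coneGraph G k).Adj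
        (Sum.inr i) (Sum.inr j) from fun h => h]
  have hrow : G.adjMatrix ℝ *ᵥ (fun _ => (1:ℝ)) = fun _ => (d:ℝ) := by
    funext v
    rw [SimpleGraph.adjMatrix_mulVec_apply]
    rw [Finset.sum_const, SimpleGraph.card_neighborFinset_eq_degree, hreg v, nsmul_eq_mul,
      mul_one]
  have hpoly := aux_cone_charpoly_key k hk (G.adjMatrix ℝ) d hrow _ hM
  have hfac : (Polynomial.X^2 - Polynomial.C (d:ℝ) * Polynomial.X -
      Polynomial.C ((k * Fintype.card V : ℕ):ℝ))
      = (Polynomial.X - Polynomial.C ((χ:ℝ)*ν)) * (Polynomial.X - Polynomial.C (-ν)) := by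
    rw [hd, hkn, show ((χ:ℝ)-1)*ν = (χ:ℝ)*ν - ν from by ring,
      show (χ:ℝ)*ν^2 = ((χ:ℝ)*ν)*ν from by ring]
    simp only [_root_.map_mul, _root_.map_sub, _root_.map_neg]
    ring
  rw [hfac, hd] at hpoly
  -- pass to roots
  have hMne : ((coneGraph G k).adjMatrix ℝ).charpoly ≠ 0 := (Matrix.charpoly_monic _).ne_zero
  have hAne : (G.adjMatrix ℝ).charpoly ≠ 0 := (Matrix.charpoly_monic _).ne_zero
  have hXd : (Polynomial.X - Polynomial.C (((χ:ℝ)-1)*ν)) ≠ 0 := Polynomial.X_sub_C_ne_zero _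
  have hXa : (Polynomial.X - Polynomial.C ((χ:ℝ)*ν)) ≠ 0 := Polynomial.X_sub_C_ne_zero _
  have hXb : (Polynomial.X - Polynomial.C (-ν)) ≠ 0 := Polynomial.X_sub_C_ne_zero _
  have hpow : (Polynomial.X : Polynomial ℝ)^(k-1) ≠ 0 :=
    pow_ne_zero _ Polynomial.X_ne_zero
  have hroots := congrArg Polynomial.roots hpoly
  rw [Polynomial.roots_mul (mul_ne_zero hXd hMne),
    Polynomial.roots_mul (mul_ne_zero hpow (mul_ne_zero (mul_ne_zero hXa hXb) hAne)),
    Polynomial.roots_mul (mul_ne_zero (mul_ne_zero hXa hXb) hAne),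
    Polynomial.roots_mul (mul_ne_zero hXa hXb),
    Polynomial.roots_pow, Polynomial.roots_X, Multiset.nsmul_singleton] at hroots
  simp only [Polynomial.roots_X_sub_C] at hroots
  have hspecCone : ((coneGraph G k).adjMatrix ℝ).charpoly.roots = spec (coneGraph G k) :=
    aux_roots_charpoly_hermitian (adjHerm (coneGraph G k))
  have hspecG : (G.adjMatrix ℝ).charpoly.roots = spec G :=
    aux_roots_charpoly_hermitian (adjHerm G)
  rw [hspecCone, hspecG] at hroots
  -- hroots : {d'} + specCone = replicate (k-1) 0 + (({χν} + {-ν}) + spec G)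
  have hd'pos : 0 < ((χ:ℝ) - 1) * ν := by
    have : (2:ℝ) ≤ (χ:ℝ) := by exact_mod_cast hχ2
    nlinarith
  have hne1 : ((χ:ℝ)*ν) ≠ ((χ:ℝ)-1)*ν := by
    intro h; nlinarith
  have hne2 : (-ν) ≠ ((χ:ℝ)-1)*ν := by
    intro h; nlinarith
  have key1 : spec (coneGraph G k) =
      ((χ : ℝ) * ν) ::ₘ (-ν) ::ₘ
        (Multiset.replicate (k - 1) (0 : ℝ) + (spec G).erase (((χ : ℝ) - 1) * ν)) := by
    rw [Multiset.singleton_add] at hroots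
    have hR : Multiset.replicate (k-1) (0:ℝ) + (({(χ:ℝ)*ν} + {-ν}) + spec G)
        = ((χ:ℝ)*ν) ::ₘ (-ν) ::ₘ (spec G + Multiset.replicate (k-1) 0) := by
      simp only [Multiset.singleton_add, Multiset.cons_add, Multiset.add_cons]
      rw [add_comm]
    rw [hR] at hroots
    have h2 := congrArg (fun s => Multiset.erase s (((χ:ℝ)-1)*ν)) hroots
    simp only [Multiset.erase_cons_head] at h2
    rw [Multiset.erase_cons_tail _ hne1, Multiset.erase_cons_tail _ hne2] at h2
    rw [h2]
    congr 2
    by_cases hmem : ((χ:ℝ)-1)*ν ∈ spec G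
    · rw [Multiset.erase_add_left_pos _ hmem, add_comm]

    · rw [Multiset.erase_of_notMem, Multiset.erase_of_notMem hmem, add_comm]
      intro hc
      rcases Multiset.mem_add.mp hc with hc | hc
      · exact hmem hc
      · exact (ne_of_gt hd'pos) (Multiset.eq_of_mem_replicate hc)
  refine ⟨key1, ?_, ?_⟩
  · -- chromatic number of the cone
    have hcol : (coneGraph G k).Colorable (χ + 1) := by
      refine ⟨SimpleGraph.Coloring.mk
        (fun x => Sum.elim (fun v => (C v).castSucc) (fun _ => Fin.last χ) x) ?_⟩
      rintro (u|i) (v|j) hadj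
      · intro h
        exact C.valid hadj (Fin.castSucc_injective _ h)
      · exact Fin.ne_of_lt (Fin.castSucc_lt_last _)
      · intro h
        exact (Fin.ne_of_lt (Fin.castSucc_lt_last (C v))) h.symm
      · exact absurd hadj (fun h => h)
    have hup : (coneGraph G k).chromaticNumber ≤ (χ + 1 : ℕ) := hcol.chromaticNumber_le
    have hlow : ((χ + 1 : ℕ) : ℕ∞) ≤ (coneGraph G k).chromaticNumber := by
      rw [SimpleGraph.chromaticNumber]
      refine le_iInf₂ fun t ht => ?_
      -- ht : (coneGraph G k).Colorable t
      obtain ⟨c⟩ := ht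
      have ht1 : 1 ≤ t := by
        have : Nonempty (Fin t) := ⟨c (Sum.inr ⟨0, hk⟩)⟩
        exact Fin.pos_iff_nonempty.mpr this
      set c0 : Fin t := c (Sum.inr ⟨0, hk⟩) with hc0
      have hvne : ∀ v : V, c (Sum.inl v) ≠ c0 :=
        fun v => c.valid (show (coneGraph G k).Adj (Sum.inl v) (Sum.inr ⟨0, hk⟩) from trivial)
      have hGcol : G.Colorable (t - 1) := by
        have hcol' : G.Coloring {x : Fin t // x ≠ c0} := SimpleGraph.Coloring.mk
          (fun v => ⟨c (Sum.inl v), hvne v⟩)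
          (fun {u v} hadj h => c.valid
            (show (coneGraph G k).Adj (Sum.inl u) (Sum.inl v) from hadj)
            (congrArg Subtype.val h))
        have hcard : Fintype.card {x : Fin t // x ≠ c0} = t - 1 := by
          have h1 : Fintype.card {x : Fin t // ¬ (x = c0)} = t - 1 := by
            rw [Fintype.card_subtype_compl, Fintype.card_subtype_eq, Fintype.card_fin]
          exact h1
        exact hcard ▸ hcol'.colorable
      have hchrom : G.chromaticNumber ≤ (t - 1 : ℕ) := hGcol.chromaticNumber_le
      rw [hχ] at hchrom
      have : χ ≤ t - 1 := by exact_mod_cast hchrom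
      have : χ + 1 ≤ t := by omega
      exact_mod_cast this
    refine le_antisymm ?_ ?_
    · exact_mod_cast hup
    · exact_mod_cast hlow
  · -- the Hoffman identity for the cone
    set e := (adjHerm (coneGraph G k)).eigenvalues with he
    have hmem : ∀ i, e i ∈ spec (coneGraph G k) := fun i =>
      Multiset.mem_map_of_mem e (Finset.mem_univ_val i)
    have hSpecG_bound : ∀ z ∈ spec G, -ν ≤ z ∧ z ≤ ((χ:ℝ)-1)*ν := by
      intro z hz
      obtain ⟨j, _, rfl⟩ := Multiset.mem_map.mp hz
      exact ⟨hmin ▸ hge_min j, hmax ▸ hle_max j⟩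
    have hχν_nonneg : (0:ℝ) ≤ (χ:ℝ)*ν := by positivity
    have hb : ∀ i, -ν ≤ e i ∧ e i ≤ (χ:ℝ)*ν := by
      intro i
      have h := hmem i
      rw [key1] at h
      rcases Multiset.mem_cons.mp h with h | h
      · exact ⟨by rw [h]; linarith, le_of_eq h⟩
      rcases Multiset.mem_cons.mp h with h | h
      · exact ⟨h.ge, by rw [h]; linarith⟩
      rcases Multiset.mem_add.mp h with h | h
      · have h0 : e i = 0 := Multiset.eq_of_mem_replicate h
        exact ⟨by rw [h0]; linarith, by rw [h0]; linarith⟩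
      · have hz := hSpecG_bound _ (Multiset.mem_of_mem_erase h)
        refine ⟨hz.1, le_trans hz.2 ?_⟩
        nlinarith
    have hmax_mem : ∃ i, e i = (χ:ℝ)*ν := by
      have h : ((χ:ℝ)*ν) ∈ spec (coneGraph G k) := key1 ▸ Multiset.mem_cons_self _ _
      obtain ⟨i, _, hi⟩ := Multiset.mem_map.mp h
      exact ⟨i, hi⟩
    have hmin_mem : ∃ i, e i = -ν := by
      have h : (-ν) ∈ spec (coneGraph G k) :=
        key1 ▸ Multiset.mem_cons.mpr (Or.inr (Multiset.mem_cons_self _ _))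
      obtain ⟨i, _, hi⟩ := Multiset.mem_map.mp h
      exact ⟨i, hi⟩
    have hconemax : lamMax (adjHerm (coneGraph G k)) = (χ:ℝ)*ν := by
      obtain ⟨i0, hi0⟩ := hmax_mem
      refine le_antisymm (ciSup_le fun i => (hb i).2) ?_
      rw [← hi0]
      exact le_ciSup (Set.Finite.bddAbove (Set.finite_range e)) i0
    have hconemin : lamMin (adjHerm (coneGraph G k)) = -ν := by
      obtain ⟨i0, hi0⟩ := hmin_mem
      refine le_antisymm ?_ (le_ciInf fun i => (hb i).1)
      rw [← hi0]
      exact ciInf_le (Set.Finite.bddBelow (Set.finite_range e)) i0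
    rw [show lamMax (adjHerm (coneGraph G k)) = (χ:ℝ)*ν from hconemax,
      show lamMin (adjHerm (coneGraph G k)) = -ν from hconemin]
    rw [show ((χ:ℝ)*ν) / (-ν) = -(χ:ℝ) from by
      rw [div_eq_iff (neg_ne_zero.mpr hν')]; ring]
    ring
end

section
/- Let G be a connected graph with at least two edges such that the least eigenvalue of the line graph L(G) equals -2. Then L(G) is Hoffman colorable if and only if G is 1-factorable (i.e., G is regular and its edge set partitions into perfect matchings). -/
open Matrix Finset BigOperators Real

attribute [local instance] Classical.propDecidable

/-- A graph is 1-factorable if its edge set can be partitioned into perfect matchings: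
there are d color classes of edges such that every vertex lies on exactly one edge
of each class. -/
def IsOneFactorable {V : Type*} (G : SimpleGraph V) : Prop :=
  ∃ (d : ℕ) (c : G.edgeSet → Fin d), ∀ (i : Fin d) (v : V),
    ∃! e : G.edgeSet, c e = i ∧ v ∈ (e : Sym2 V)

/-! ### Auxiliary spectral lemmas -/

section Spectral

set_option linter.unusedSectionVars false

variable {n : Type*} [Fintype n] [DecidableEq n]

lemma eig_exists' {A : Matrix n n ℝ} (hA : A.IsHermitian) (i : n) :
    ∃ v : n → ℝ, v ≠ 0 ∧ A *ᵥ v = hA.eigenvalues i • v := by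
  refine ⟨hA.eigenvectorBasis i, ?_, hA.mulVec_eigenvectorBasis i⟩
  intro h
  have h1 : ‖hA.eigenvectorBasis i‖ = 1 := hA.eigenvectorBasis.orthonormal.1 i
  have : (hA.eigenvectorBasis i : EuclideanSpace ℝ n) = 0 := by
    ext j; exact congrFun h j
  rw [this] at h1; simp at h1

lemma eig_mem' {A : Matrix n n ℝ} (hA : A.IsHermitian)
    {μ : ℝ} {v : n → ℝ} (hv : v ≠ 0) (h : A *ᵥ v = μ • v) : ∃ i, hA.eigenvalues i = μ := by
  by_contra hc
  push_neg at hc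
  set B := hA.eigenvectorBasis with hB
  have key : ∀ i, hA.eigenvalues i * (∑ j, B i j * v j) = μ * (∑ j, B i j * v j) := by
    intro i
    have h1 : ∀ j, (A *ᵥ (B i : n → ℝ)) j = hA.eigenvalues i * B i j := by
      intro j
      have := congrFun (hA.mulVec_eigenvectorBasis i) j
      simpa using this
    have hsym : ∀ j k, A j k = A k j := by
      intro j k
      have := congrFun (congrFun hA.symm j) k
      simpa [Matrix.conjTranspose_apply] using this
    calc hA.eigenvalues i * (∑ j, B i j * v j)
        = ∑ j, (hA.eigenvalues i * B i j) * v j := by rw [Finset.mul_sum]; ring_nf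
      _ = ∑ j, (∑ k, A j k * B i k) * v j := by
          refine Finset.sum_congr rfl fun j _ => ?_
          rw [← h1 j]; rfl
      _ = ∑ j, ∑ k, (A j k * B i k) * v j := by
          refine Finset.sum_congr rfl fun j _ => ?_
          rw [Finset.sum_mul]
      _ = ∑ k, ∑ j, (A j k * B i k) * v j := Finset.sum_comm
      _ = ∑ k, B i k * (∑ j, A k j * v j) := by
          refine Finset.sum_congr rfl fun k _ => ?_
          rw [Finset.mul_sum]
          refine Finset.sum_congr rfl fun j _ => ?_
          rw [hsym j k]; ring
      _ = ∑ k, B i k * (μ * v k) := by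
          refine Finset.sum_congr rfl fun k _ => ?_
          have := congrFun h k
          simp only [Matrix.mulVec, dotProduct] at this
          rw [this]; rfl
      _ = μ * (∑ j, B i j * v j) := by
          rw [Finset.mul_sum]
          exact Finset.sum_congr rfl fun j _ => by ring
  have hz : ∀ i, (∑ j, B i j * v j) = 0 := by
    intro i
    have := key i
    have hne := hc i
    by_contra h0
    exact hne (mul_right_cancel₀ h0 this)
  apply hv
  have hw : (WithLp.toLp 2 v : EuclideanSpace ℝ n) = 0 := by
    have : B.repr (WithLp.toLp 2 v : EuclideanSpace ℝ n) = 0 := by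
      ext i
      have : B.repr (WithLp.toLp 2 v : EuclideanSpace ℝ n) i = inner ℝ (B i) (WithLp.toLp 2 v : EuclideanSpace ℝ n) := by
        rw [← OrthonormalBasis.repr_apply_apply]
      rw [this]
      simpa [PiLp.inner_apply, RCLike.inner_apply, starRingEnd_apply, mul_comm] using hz i
    simpa using congrArg B.repr.symm this
  ext j; simpa using congrArg (fun w => w.ofLp j) hw

end Spectral

/-! ### Auxiliary graph lemmas -/

section Graphs

set_option linter.unusedSectionVars false

variable {W : Type*} [Fintype W] [DecidableEq W]

lemma eig_le_of_degree_le (H : SimpleGraph W) [DecidableRel H.Adj]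
    {μ : ℝ} {v : W → ℝ} (hv : v ≠ 0) (h : H.adjMatrix ℝ *ᵥ v = μ • v)
    {k : ℝ} (hk : ∀ w, (H.degree w : ℝ) ≤ k) : μ ≤ k := by
  obtain ⟨j0, hj0⟩ := Function.ne_iff.mp hv
  obtain ⟨i0, -, hi0⟩ := Finset.exists_max_image Finset.univ (fun w => |v w|)
    ⟨j0, Finset.mem_univ _⟩
  have hM : 0 < |v i0| := lt_of_lt_of_le (abs_pos.mpr hj0) (hi0 j0 (Finset.mem_univ _))
  have key : μ * |v i0| ≤ k * |v i0| := by
    calc μ * |v i0| ≤ |μ * v i0| := by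
          rw [abs_mul]; exact mul_le_mul_of_nonneg_right (le_abs_self μ) (abs_nonneg _)
      _ = |(H.adjMatrix ℝ *ᵥ v) i0| := by rw [h]; rfl
      _ = |∑ u ∈ H.neighborFinset i0, v u| := by rw [SimpleGraph.adjMatrix_mulVec_apply]
      _ ≤ ∑ u ∈ H.neighborFinset i0, |v u| := Finset.abs_sum_le_sum_abs _ _
      _ ≤ ∑ _u ∈ H.neighborFinset i0, |v i0| :=
          Finset.sum_le_sum fun u _ => hi0 u (Finset.mem_univ _)
      _ = (H.degree i0 : ℝ) * |v i0| := by
          rw [Finset.sum_const, SimpleGraph.card_neighborFinset_eq_degree, nsmul_eq_mul]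
      _ ≤ k * |v i0| := mul_le_mul_of_nonneg_right (hk i0) (abs_nonneg _)
  exact le_of_mul_le_mul_right key hM

lemma lamMax_le_of_degree_le (H : SimpleGraph W) [DecidableRel H.Adj] [Nonempty W]
    (hH : (H.adjMatrix ℝ).IsHermitian)
    {k : ℝ} (hk : ∀ w, (H.degree w : ℝ) ≤ k) : lamMax hH ≤ k := by
  refine ciSup_le fun i => ?_
  obtain ⟨v, hv, hmv⟩ := eig_exists' hH i
  exact eig_le_of_degree_le H hv hmv hk

lemma le_lamMax_of_regular (H : SimpleGraph W) [DecidableRel H.Adj] [Nonempty W]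
    (hH : (H.adjMatrix ℝ).IsHermitian)
    {k : ℝ} (hk : ∀ w, (H.degree w : ℝ) = k) : k ≤ lamMax hH := by
  have h1 : H.adjMatrix ℝ *ᵥ (fun _ => (1 : ℝ)) = k • (fun _ => (1 : ℝ)) := by
    ext w
    rw [SimpleGraph.adjMatrix_mulVec_apply]
    simp [hk w]
  obtain ⟨i, hi⟩ := eig_mem' hH
    (by intro h0; simpa using congrFun h0 (Classical.arbitrary W)) h1
  rw [← hi]
  exact le_ciSup (Set.Finite.bddAbove (Set.finite_range _)) i

variable {V : Type*} [Fintype V] [DecidableEq V] (G : SimpleGraph V) [DecidableRel G.Adj]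

/-- Edges of `G` incident to a vertex, as a finset of `G.edgeSet`. -/
noncomputable def edgesAt (v : V) : Finset G.edgeSet :=
  Finset.univ.filter (fun e => v ∈ (e : Sym2 V))

lemma mem_edgesAt {v : V} {e : G.edgeSet} : e ∈ edgesAt G v ↔ v ∈ (e : Sym2 V) := by
  simp [edgesAt]

lemma card_edgesAt (v : V) : (edgesAt G v).card = G.degree v := by
  classical
  have himg : (edgesAt G v).image (Subtype.val) = G.incidenceFinset v := by
    ext e
    simp only [Finset.mem_image, mem_edgesAt, SimpleGraph.mem_incidenceFinset,
      SimpleGraph.incidenceSet]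
    constructor
    · rintro ⟨f, hf, rfl⟩; exact ⟨f.2, hf⟩
    · rintro ⟨he, hv⟩; exact ⟨⟨e, he⟩, hv, rfl⟩
  have := congrArg Finset.card himg
  rwa [Finset.card_image_of_injective _ Subtype.val_injective,
    SimpleGraph.card_incidenceFinset_eq_degree] at this

lemma lineGraph_adj_iff' {u v : V} (huv : G.Adj u v) {e f : G.edgeSet}
    (he : (e : Sym2 V) = s(u, v)) :
    G.lineGraph.Adj e f ↔ f ≠ e ∧ (u ∈ (f : Sym2 V) ∨ v ∈ (f : Sym2 V)) := by
  rw [SimpleGraph.lineGraph_adj_iff_exists]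
  constructor
  · rintro ⟨hne, x, hx1, hx2⟩
    rw [he, Sym2.mem_iff] at hx1
    rcases hx1 with rfl | rfl
    · exact ⟨hne.symm, Or.inl hx2⟩
    · exact ⟨hne.symm, Or.inr hx2⟩
  · rintro ⟨hne, hx | hx⟩
    · exact ⟨hne.symm, u, by rw [he]; simp, hx⟩
    · exact ⟨hne.symm, v, by rw [he]; simp, hx⟩

lemma lineGraph_neighborFinset {u v : V} (huv : G.Adj u v) (e : G.edgeSet)
    (he : (e : Sym2 V) = s(u, v)) :
    G.lineGraph.neighborFinset e = (edgesAt G u ∪ edgesAt G v).erase e := by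
  ext f
  rw [SimpleGraph.mem_neighborFinset, lineGraph_adj_iff' G huv he, Finset.mem_erase,
    Finset.mem_union, mem_edgesAt, mem_edgesAt]

lemma lineGraph_degree {u v : V} (huv : G.Adj u v) (e : G.edgeSet)
    (he : (e : Sym2 V) = s(u, v)) :
    G.lineGraph.degree e + 2 = G.degree u + G.degree v := by
  classical
  have hmem : e ∈ edgesAt G u ∪ edgesAt G v := by
    rw [Finset.mem_union, mem_edgesAt]; left; rw [he]; simp
  have hinter : edgesAt G u ∩ edgesAt G v = {e} := by
    ext f
    simp only [Finset.mem_inter, mem_edgesAt, Finset.mem_singleton]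
    constructor
    · rintro ⟨hu, hv⟩
      have : (f : Sym2 V) = s(u, v) := (Sym2.mem_and_mem_iff huv.ne).mp ⟨hu, hv⟩
      exact Subtype.ext (this.trans he.symm)
    · rintro rfl
      constructor <;> rw [he] <;> simp
  have hdeg : G.lineGraph.degree e = ((edgesAt G u ∪ edgesAt G v).erase e).card := by
    rw [← SimpleGraph.card_neighborFinset_eq_degree, lineGraph_neighborFinset G huv e he]
  have hcard : ((edgesAt G u ∪ edgesAt G v).erase e).card + 1
      = (edgesAt G u ∪ edgesAt G v).card := by
    rw [Finset.card_erase_of_mem hmem]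
    exact Nat.succ_pred_eq_of_pos (Finset.card_pos.mpr ⟨e, hmem⟩)
  have hunion : (edgesAt G u ∪ edgesAt G v).card + (edgesAt G u ∩ edgesAt G v).card
      = (edgesAt G u).card + (edgesAt G v).card := Finset.card_union_add_card_inter _ _
  rw [hinter, Finset.card_singleton] at hunion
  rw [hdeg, ← card_edgesAt G u, ← card_edgesAt G v]
  omega

lemma edgesAt_isClique (v : V) : G.lineGraph.IsClique (edgesAt G v : Set G.edgeSet) := by
  intro e he f hf hne
  rw [Finset.mem_coe, mem_edgesAt] at he hf
  exact SimpleGraph.lineGraph_adj_iff_exists.mpr ⟨hne, v, he, hf⟩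

lemma degree_le_chromatic (v : V) :
    (G.degree v : ℕ∞) ≤ G.lineGraph.chromaticNumber := by
  have := (edgesAt_isClique G v).card_le_chromaticNumber
  rwa [card_edgesAt G v] at this

lemma mem_of_closure {T : Set V} (hconn : G.Connected) (hne : T.Nonempty)
    (hcl : ∀ a b, G.Adj a b → a ∈ T → b ∈ T) (x : V) : x ∈ T := by
  obtain ⟨w, hw⟩ := hne
  obtain ⟨p⟩ := hconn w x
  clear hconn
  induction p with
  | nil => exact hw
  | cons h p ih => exact ih (hcl _ _ h hw)

/-- Every edge has adjacent endpoints. -/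
lemma exists_endpoints (e : G.edgeSet) :
    ∃ u v : V, G.Adj u v ∧ (e : Sym2 V) = s(u, v) := by
  obtain ⟨e, he⟩ := e
  induction e with
  | _ u v => exact ⟨u, v, (SimpleGraph.mem_edgeSet G).mp he, rfl⟩

end Graphs

/-- for a connected graph G with at least two edges whose line graph has
least eigenvalue -2, the line graph L(G) is Hoffman colorable iff G is 1-factorable. -/
theorem stmt12 {V : Type*} [Fintype V] [DecidableEq V] (G : SimpleGraph V)
    [DecidableRel G.Adj]
    (hconn : G.Connected)
    (hedges : 2 ≤ G.edgeFinset.card)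
    (hmin : lamMin (adjHerm G.lineGraph) = -2)
    (χL : ℕ) (hχL : G.lineGraph.chromaticNumber = χL) :
    (χL : ℝ) = 1 - lamMax (adjHerm G.lineGraph) / lamMin (adjHerm G.lineGraph) ↔
      IsOneFactorable G := by
  have hEne : Nonempty G.edgeSet := by
    have hpos : 0 < G.edgeFinset.card := by omega
    obtain ⟨e, he⟩ := Finset.card_pos.mp hpos
    exact ⟨⟨e, SimpleGraph.mem_edgeFinset.mp he⟩⟩
  have hVne : Nonempty V := by
    obtain ⟨e⟩ := hEne
    obtain ⟨u, v, h, -⟩ := exists_endpoints G e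
    exact ⟨u⟩
  constructor
  · -- Hoffman colorable → 1-factorable
    intro hHoff
    obtain ⟨w0, -, hw0⟩ := Finset.exists_max_image (Finset.univ : Finset V) (fun x => G.degree x)
      ⟨Classical.arbitrary V, Finset.mem_univ _⟩
    set Δ := G.degree w0 with hΔdef
    have hΔ : ∀ x, G.degree x ≤ Δ := fun x => hw0 x (Finset.mem_univ _)
    have hΔχ : Δ ≤ χL := by
      have := degree_le_chromatic G w0
      rw [hχL] at this
      exact_mod_cast this
    have hup : lamMax (adjHerm G.lineGraph) ≤ 2 * Δ - 2 := by
      refine lamMax_le_of_degree_le _ _ fun e => ?_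
      obtain ⟨u, v, huv, he⟩ := exists_endpoints G e
      have h2 := lineGraph_degree G huv e he
      have h3 : G.lineGraph.degree e + 2 ≤ 2 * Δ := by
        have := hΔ u; have := hΔ v; omega
      have h4 := (Nat.cast_le (α := ℝ)).mpr h3
      push_cast at h4
      linarith
    rw [hmin] at hHoff
    have hlam : lamMax (adjHerm G.lineGraph) = 2 * χL - 2 := by
      field_simp at hHoff
      linarith
    have hΔeq : (Δ : ℝ) = χL := by
      have h5 : (Δ : ℝ) ≤ χL := by exact_mod_cast hΔχ
      linarith
    have hΔχ' : Δ = χL := by exact_mod_cast hΔeq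
    have hlamΔ : lamMax (adjHerm G.lineGraph) = 2 * Δ - 2 := by rw [hlam, hΔeq]
    -- eigenvector for the largest eigenvalue
    obtain ⟨i0, -, hi0⟩ := Finset.exists_max_image Finset.univ
      (adjHerm G.lineGraph).eigenvalues ⟨Classical.arbitrary _, Finset.mem_univ _⟩
    have hsup : lamMax (adjHerm G.lineGraph) = (adjHerm G.lineGraph).eigenvalues i0 :=
      le_antisymm (ciSup_le fun j => hi0 j (Finset.mem_univ _))
        (le_ciSup (Set.Finite.bddAbove (Set.finite_range _)) i0)
    obtain ⟨v, hv, hmv⟩ := eig_exists' (adjHerm G.lineGraph) i0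
    rw [← hsup, hlamΔ] at hmv
    obtain ⟨j0, hj0⟩ := Function.ne_iff.mp hv
    obtain ⟨e0, -, he0⟩ := Finset.exists_max_image Finset.univ (fun e => |v e|)
      ⟨j0, Finset.mem_univ _⟩
    set M := |v e0| with hMdef
    have hM : 0 < M := lt_of_lt_of_le (abs_pos.mpr hj0) (he0 j0 (Finset.mem_univ _))
    set S : Set G.edgeSet := {e | |v e| = M} with hSdef
    have hprop : ∀ e ∈ S, (∀ f, G.lineGraph.Adj e f → f ∈ S) ∧
        (∀ x, x ∈ (e : Sym2 V) → G.degree x = Δ) := by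
      intro e heS
      have heM : |v e| = M := heS
      obtain ⟨u, w, huw, he⟩ := exists_endpoints G e
      have hcast : (G.lineGraph.degree e : ℝ) ≤ 2 * Δ - 2 := by
        have h2 := lineGraph_degree G huw e he
        have h3 : G.lineGraph.degree e + 2 ≤ 2 * Δ := by
          have := hΔ u; have := hΔ w; omega
        have h4 := (Nat.cast_le (α := ℝ)).mpr h3
        push_cast at h4
        linarith
      have hAe : ((G.lineGraph.adjMatrix ℝ) *ᵥ v) e
          = ∑ f ∈ G.lineGraph.neighborFinset e, v f :=
        SimpleGraph.adjMatrix_mulVec_apply _ _ _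
      have hve : (2 * (Δ : ℝ) - 2) * v e = ∑ f ∈ G.lineGraph.neighborFinset e, v f := by
        rw [← hAe, hmv]; rfl
      have hs1 : (2 * (Δ : ℝ) - 2) * M ≤ |∑ f ∈ G.lineGraph.neighborFinset e, v f| := by
        calc (2 * (Δ : ℝ) - 2) * M ≤ |2 * (Δ : ℝ) - 2| * M :=
              mul_le_mul_of_nonneg_right (le_abs_self _) hM.le
          _ = |(2 * (Δ : ℝ) - 2) * v e| := by rw [abs_mul, heM]
          _ = |∑ f ∈ G.lineGraph.neighborFinset e, v f| := by rw [hve]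
      have hs2 : |∑ f ∈ G.lineGraph.neighborFinset e, v f|
          ≤ ∑ f ∈ G.lineGraph.neighborFinset e, |v f| := Finset.abs_sum_le_sum_abs _ _
      have hs3 : ∑ f ∈ G.lineGraph.neighborFinset e, |v f|
          ≤ (G.lineGraph.degree e : ℝ) * M := by
        calc ∑ f ∈ G.lineGraph.neighborFinset e, |v f|
            ≤ ∑ _f ∈ G.lineGraph.neighborFinset e, M :=
              Finset.sum_le_sum fun f _ => he0 f (Finset.mem_univ _)
          _ = (G.lineGraph.degree e : ℝ) * M := by
              rw [Finset.sum_const, SimpleGraph.card_neighborFinset_eq_degree, nsmul_eq_mul]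
      have hs4 : (G.lineGraph.degree e : ℝ) * M ≤ (2 * (Δ : ℝ) - 2) * M :=
        mul_le_mul_of_nonneg_right hcast hM.le
      have hdegeq : (G.lineGraph.degree e : ℝ) = 2 * Δ - 2 := by
        have h6 : (G.lineGraph.degree e : ℝ) * M = (2 * (Δ : ℝ) - 2) * M := by linarith
        exact mul_right_cancel₀ (ne_of_gt hM) h6
      have hsumeq : ∑ f ∈ G.lineGraph.neighborFinset e, |v f|
          = (G.lineGraph.degree e : ℝ) * M := by
        refine le_antisymm hs3 ?_
        rw [hdegeq]
        linarith
      have hnat : G.lineGraph.degree e + 2 = 2 * Δ := by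
        have h7 : ((G.lineGraph.degree e + 2 : ℕ) : ℝ) = ((2 * Δ : ℕ) : ℝ) := by
          push_cast
          linarith
        exact_mod_cast h7
      have hdeg2 := lineGraph_degree G huw e he
      have hdu : G.degree u = Δ := by have := hΔ u; have := hΔ w; omega
      have hdw : G.degree w = Δ := by have := hΔ u; have := hΔ w; omega
      constructor
      · intro f hadj
        have hfnbr : f ∈ G.lineGraph.neighborFinset e :=
          (SimpleGraph.mem_neighborFinset _ _ _).mpr hadj
        have hnn : ∀ g ∈ G.lineGraph.neighborFinset e, 0 ≤ M - |v g| :=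
          fun g _ => sub_nonneg.mpr (he0 g (Finset.mem_univ _))
        have hzero : ∑ g ∈ G.lineGraph.neighborFinset e, (M - |v g|) = 0 := by
          rw [Finset.sum_sub_distrib, Finset.sum_const, nsmul_eq_mul,
            SimpleGraph.card_neighborFinset_eq_degree, hsumeq]
          ring
        have h8 := (Finset.sum_eq_zero_iff_of_nonneg hnn).mp hzero f hfnbr
        show |v f| = M
        linarith
      · intro x hx
        rw [he, Sym2.mem_iff] at hx
        rcases hx with rfl | rfl
        · exact hdu
        · exact hdw
    have he0S : e0 ∈ S := rfl
    have hreg : ∀ x, G.degree x = Δ := by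
      set T : Set V := {x | ∃ e ∈ S, x ∈ (e : Sym2 V)} with hT
      have hTne : T.Nonempty := by
        obtain ⟨u, w, huw, he⟩ := exists_endpoints G e0
        exact ⟨u, e0, he0S, by rw [he]; simp⟩
      have hTcl : ∀ a b, G.Adj a b → a ∈ T → b ∈ T := by
        rintro a b hab ⟨e, heS, hae⟩
        set f : G.edgeSet := ⟨s(a, b), (SimpleGraph.mem_edgeSet G).mpr hab⟩ with hf
        by_cases hef : f = e
        · exact ⟨f, hef ▸ heS, by rw [hf]; simp⟩
        · have hadj : G.lineGraph.Adj e f :=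
            SimpleGraph.lineGraph_adj_iff_exists.mpr
              ⟨fun h => hef h.symm, a, hae, by rw [hf]; simp⟩
          exact ⟨f, (hprop e heS).1 f hadj, by rw [hf]; simp⟩
      intro x
      obtain ⟨e, heS, hxe⟩ := mem_of_closure G hconn hTne hTcl x
      exact (hprop e heS).2 x hxe
    -- build the 1-factorization from a Δ-edge-coloring
    have hcolorable : G.lineGraph.Colorable Δ := by
      rw [← SimpleGraph.chromaticNumber_le_iff_colorable, hχL, hΔχ']
    obtain ⟨C⟩ := hcolorable
    refine ⟨Δ, C, ?_⟩
    intro i x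
    have hcardx : (edgesAt G x).card = Δ := by rw [card_edgesAt]; exact hreg x
    have hinj : Set.InjOn C (edgesAt G x : Set G.edgeSet) := by
      intro e he f hf hef
      by_contra hne
      exact C.valid (edgesAt_isClique G x he hf hne) hef
    have himg : (edgesAt G x).image C = Finset.univ := by
      apply Finset.eq_univ_of_card
      rw [Finset.card_image_of_injOn (by exact_mod_cast hinj), hcardx, Fintype.card_fin]
    have hi : i ∈ (edgesAt G x).image C := by rw [himg]; exact Finset.mem_univ i
    obtain ⟨e, he, hce⟩ := Finset.mem_image.mp hi
    refine ⟨e, ⟨hce, (mem_edgesAt G).mp he⟩, ?_⟩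
    rintro f ⟨hcf, hxf⟩
    exact hinj (Finset.mem_coe.mpr ((mem_edgesAt G).mpr hxf)) (Finset.mem_coe.mpr he)
      (hcf.trans hce.symm)
  · -- 1-factorable → Hoffman colorable
    rintro ⟨d, c, hc⟩
    have hreg : ∀ w, G.degree w = d := by
      intro w
      have hg : ∀ i : Fin d, ∃ e : G.edgeSet, c e = i ∧ w ∈ (e : Sym2 V) :=
        fun i => (hc i w).exists
      choose g hg1 hg2 using hg
      have hset : edgesAt G w = Finset.univ.image g := by
        ext e
        rw [mem_edgesAt, Finset.mem_image]
        constructor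
        · intro hw
          exact ⟨c e, Finset.mem_univ _,
            ((hc (c e) w).unique ⟨hg1 _, hg2 _⟩ ⟨rfl, hw⟩)⟩
        · rintro ⟨i, -, rfl⟩; exact hg2 i
      have hinj : Function.Injective g := by
        intro i j hij
        rw [← hg1 i, hij, hg1 j]
      rw [← card_edgesAt G w, hset, Finset.card_image_of_injective _ hinj,
        Finset.card_univ, Fintype.card_fin]
    have hLdeg : ∀ e : G.edgeSet, (G.lineGraph.degree e : ℝ) = 2 * d - 2 := by
      intro e
      obtain ⟨u, v, huv, he⟩ := exists_endpoints G e
      have h2 := lineGraph_degree G huv e he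
      rw [hreg u, hreg v] at h2
      have h3 : ((G.lineGraph.degree e + 2 : ℕ) : ℝ) = ((d + d : ℕ) : ℝ) := by
        exact_mod_cast congrArg (Nat.cast (R := ℝ)) h2
      push_cast at h3
      linarith
    have hmax : lamMax (adjHerm G.lineGraph) = 2 * d - 2 := by
      refine le_antisymm ?_ ?_
      · exact lamMax_le_of_degree_le _ _ fun e => le_of_eq (hLdeg e)
      · exact le_lamMax_of_regular _ _ hLdeg
    have hcol : G.lineGraph.Colorable d := by
      refine ⟨SimpleGraph.Coloring.mk c ?_⟩
      intro e f hadj hcc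
      obtain ⟨hne, x, hx1, hx2⟩ := SimpleGraph.lineGraph_adj_iff_exists.mp hadj
      exact hne ((hc (c e) x).unique ⟨rfl, hx1⟩ ⟨hcc.symm, hx2⟩)
    have hchrom : G.lineGraph.chromaticNumber = d := by
      refine le_antisymm hcol.chromaticNumber_le ?_
      have h4 := degree_le_chromatic G (Classical.arbitrary V)
      rwa [hreg] at h4
    have hχd : χL = d := by
      rw [hχL] at hchrom
      exact_mod_cast hchrom
    rw [hmin, hmax, hχd]
    ring
end

section
/- Composition Theorem, eigenvector part: let G have a proper (c+1)-coloring V_0 ⊔ V_1 ⊔ … ⊔ V_c with T = G − V_0 and H_i = G[V_0 ∪ V_i]. Suppose x is an eigenvector of T with eigenvalue (c-1)ν, and y: V_0 → ℝ is such that for each 1 ≤ i ≤ c, the vector x|_{V_i} ⊔ y is an eigenvector of H_i with eigenvalue ν. Then x ⊔ y is an eigenvector of G with eigenvalue cν. -/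
open Matrix Finset BigOperators Real

/-- Composition Theorem, eigenvector part: given a proper (c+1)-coloring
V_0 ⊔ V_1 ⊔ … ⊔ V_c of G, if x is an eigenvector of T = G − V_0 with eigenvalue (c-1)ν
and for each i ≥ 1 the vector x|_{V_i} ⊔ y is an eigenvector of H_i = G[V_0 ∪ V_i] with
eigenvalue ν, then x ⊔ y is an eigenvector of G with eigenvalue cν. -/
theorem stmt14 {V : Type*} [Fintype V] [DecidableEq V] (G : SimpleGraph V)
    [DecidableRel G.Adj]
    (c : ℕ) (C : G.Coloring (Fin (c + 1)))
    (ν : ℝ) (x y : V → ℝ)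
    (hT : ∀ u, C u ≠ 0 →
      ∑ v ∈ Finset.univ.filter (fun v => G.Adj u v ∧ C v ≠ 0), x v =
        ((c : ℝ) - 1) * ν * x u)
    (hH : ∀ i : Fin (c + 1), i ≠ 0 → ∀ u, (C u = 0 ∨ C u = i) →
      ∑ v ∈ Finset.univ.filter (fun v => G.Adj u v ∧ (C v = 0 ∨ C v = i)),
          (if C v = 0 then y v else x v) =
        ν * (if C u = 0 then y u else x u)) :
    ∀ u, ∑ v ∈ Finset.univ.filter (fun v => G.Adj u v), (if C v = 0 then y v else x v) =
      (c : ℝ) * ν * (if C u = 0 then y u else x u) := by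
  intro u
  by_cases h0 : C u = 0
  · -- case C u = 0
    have hmaps : ∀ v ∈ Finset.univ.filter (fun v => G.Adj u v),
        C v ∈ Finset.univ.erase (0 : Fin (c + 1)) := by
      intro v hv
      have ha := (Finset.mem_filter.mp hv).2
      exact Finset.mem_erase.mpr ⟨fun h => C.valid ha (h0.trans h.symm), Finset.mem_univ _⟩
    have fiber := Finset.sum_fiberwise_of_maps_to hmaps
      (fun v => if C v = 0 then y v else x v)
    rw [← fiber, if_pos h0]
    have key : ∀ i ∈ Finset.univ.erase (0 : Fin (c + 1)),
        ∑ v ∈ (Finset.univ.filter (fun v => G.Adj u v)).filter (fun v => C v = i),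
          (if C v = 0 then y v else x v) = ν * y u := by
      intro i hi
      have hi0 : i ≠ 0 := (Finset.mem_erase.mp hi).1
      have hh := hH i hi0 u (Or.inl h0)
      rw [if_pos h0] at hh
      rw [← hh]
      apply Finset.sum_congr _ (fun _ _ => rfl)
      ext v
      simp only [Finset.mem_filter, Finset.mem_univ, true_and, and_assoc]
      constructor
      · rintro ⟨ha, hv⟩; exact ⟨ha, Or.inr hv⟩
      · rintro ⟨ha, hv | hv⟩
        · exact absurd (h0.trans hv.symm) (C.valid ha)
        · exact ⟨ha, hv⟩
    rw [Finset.sum_congr rfl key, Finset.sum_const]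
    have hcard : (Finset.univ.erase (0 : Fin (c + 1))).card = c := by
      simp [Finset.card_erase_of_mem]
    rw [hcard, nsmul_eq_mul]
    ring
  · -- case C u ≠ 0
    have key1 := hH (C u) h0 u (Or.inr rfl)
    rw [if_neg h0] at key1
    have key2 := hT u h0
    rw [if_neg h0]
    have e1 : Finset.univ.filter (fun v => G.Adj u v ∧ (C v = 0 ∨ C v = C u))
        = Finset.univ.filter (fun v => G.Adj u v ∧ C v = 0) := by
      ext v
      simp only [Finset.mem_filter, Finset.mem_univ, true_and]
      constructor
      · rintro ⟨ha, hv | hv⟩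
        · exact ⟨ha, hv⟩
        · exact absurd hv.symm (C.valid ha)
      · rintro ⟨ha, hv⟩; exact ⟨ha, Or.inl hv⟩
    rw [e1] at key1
    have e2 : ∑ v ∈ Finset.univ.filter (fun v => G.Adj u v ∧ ¬ C v = 0),
        (if C v = 0 then y v else x v)
      = ∑ v ∈ Finset.univ.filter (fun v => G.Adj u v ∧ C v ≠ 0), x v := by
      apply Finset.sum_congr rfl
      intro v hv
      rw [if_neg (Finset.mem_filter.mp hv).2.2]
    have hsplit := Finset.sum_filter_add_sum_filter_not
      (Finset.univ.filter (fun v => G.Adj u v)) (fun v => C v = 0)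
      (fun v => if C v = 0 then y v else x v)
    rw [← hsplit, Finset.filter_filter, Finset.filter_filter, key1, e2, key2]
    ring
end

section
/- Composition Theorem, negative eigenvector part: under the hypotheses of the Composition Theorem (x eigenvector of T = G − V_0 with eigenvalue (c-1)ν; for each i, x|_{V_i} ⊔ y an eigenvector of H_i = G[V_0 ∪ V_i] with eigenvalue ν; and additionally for each pair i ≠ j in {1,…,c} and each u ∈ V_i, Σ_{v ∈ N(u) ∩ V_j} x(v) = ν·x(u)), the vector b_i that equals x on V_i, −y on V_0, and 0 on V(T) \ V_i is an eigenvector of G with eigenvalue −ν, for each 1 ≤ i ≤ c. -/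
open Matrix Finset BigOperators Real

/-- Composition Theorem, negative eigenvector part: under the Composition
Theorem hypotheses together with the weight-regularity of the coloring of T (all
weight-intersection numbers equal ν), for each color i ≥ 1 the vector b_i equal to x on
V_i, to −y on V_0 and to 0 elsewhere is an eigenvector of G with eigenvalue −ν. -/
theorem stmt15 {V : Type*} [Fintype V] [DecidableEq V] (G : SimpleGraph V)
    [DecidableRel G.Adj]
    (c : ℕ) (C : G.Coloring (Fin (c + 1)))
    (ν : ℝ) (x y : V → ℝ)
    (hT : ∀ u, C u ≠ 0 →
      ∑ v ∈ Finset.univ.filter (fun v => G.Adj u v ∧ C v ≠ 0), x v =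
        ((c : ℝ) - 1) * ν * x u)
    (hH : ∀ i : Fin (c + 1), i ≠ 0 → ∀ u, (C u = 0 ∨ C u = i) →
      ∑ v ∈ Finset.univ.filter (fun v => G.Adj u v ∧ (C v = 0 ∨ C v = i)),
          (if C v = 0 then y v else x v) =
        ν * (if C u = 0 then y u else x u))
    (hwr : ∀ i j : Fin (c + 1), i ≠ 0 → j ≠ 0 → i ≠ j → ∀ u, C u = i →
      ∑ v ∈ Finset.univ.filter (fun v => G.Adj u v ∧ C v = j), x v = ν * x u) :
    ∀ i : Fin (c + 1), i ≠ 0 → ∀ u,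
      ∑ v ∈ Finset.univ.filter (fun v => G.Adj u v),
          (if C v = i then x v else if C v = 0 then -y v else 0) =
        -ν * (if C u = i then x u else if C u = 0 then -y u else 0) := by

  intro i hi u
  have hzero : ∀ (S : V → ℝ),
      ∑ v ∈ Finset.univ.filter (fun v => G.Adj u v ∧ C v = C u), S v = 0 := by
    intro S
    have hemp : Finset.univ.filter (fun v => G.Adj u v ∧ C v = C u) = ∅ := by
      ext v
      simp only [Finset.mem_filter, Finset.mem_univ, true_and, Finset.notMem_empty,
        iff_false, not_and]
      intro ha hc
      exact C.valid ha hc.symm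
    rw [hemp, Finset.sum_empty]
  have hsplit : (∑ v ∈ Finset.univ.filter (fun v => G.Adj u v),
        (if C v = i then x v else if C v = 0 then -y v else 0))
      = (∑ v ∈ Finset.univ.filter (fun v => G.Adj u v ∧ C v = i), x v)
        - ∑ v ∈ Finset.univ.filter (fun v => G.Adj u v ∧ C v = 0), y v := by
    rw [Finset.sum_filter, Finset.sum_filter, Finset.sum_filter, ← Finset.sum_sub_distrib]
    refine Finset.sum_congr rfl fun v _ => ?_
    by_cases h1 : C v = i
    · by_cases h2 : C v = 0
      · exact absurd (h1.symm.trans h2) hi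
      · by_cases ha : G.Adj u v <;> simp [ha, h1, h2, hi, Ne.symm hi]
    · by_cases ha : G.Adj u v <;> by_cases h2 : C v = 0 <;> simp [ha, h1, h2, hi, Ne.symm hi]
  have hHsplit : ∀ j : Fin (c + 1), j ≠ 0 →
      (∑ v ∈ Finset.univ.filter (fun v => G.Adj u v ∧ (C v = 0 ∨ C v = j)),
        (if C v = 0 then y v else x v))
      = (∑ v ∈ Finset.univ.filter (fun v => G.Adj u v ∧ C v = 0), y v)
        + ∑ v ∈ Finset.univ.filter (fun v => G.Adj u v ∧ C v = j), x v := by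
    intro j hj
    rw [Finset.sum_filter, Finset.sum_filter, Finset.sum_filter, ← Finset.sum_add_distrib]
    refine Finset.sum_congr rfl fun v _ => ?_
    by_cases h1 : C v = 0
    · by_cases h2 : C v = j
      · exact absurd (h2.symm.trans h1) hj
      · by_cases ha : G.Adj u v <;> simp [ha, h1, h2, hj, Ne.symm hj]
    · by_cases ha : G.Adj u v <;> by_cases h2 : C v = j <;> simp [ha, h1, h2, hj, Ne.symm hj]
  rw [hsplit]
  by_cases h0 : C u = 0
  · have hH' := hH i hi u (Or.inl h0)
    rw [hHsplit i hi] at hH'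
    have hz := hzero y
    rw [h0] at hz
    rw [hz, zero_add] at hH'
    rw [hH', hz, h0]
    have h0i : ¬((0 : Fin (c + 1)) = i) := fun h => hi h.symm
    simp [h0i]
  · by_cases hui : C u = i
    · have hH' := hH i hi u (Or.inr hui)
      rw [hHsplit i hi] at hH'
      have hz := hzero x
      rw [hui] at hz
      rw [hz, add_zero] at hH'
      rw [hz, hH']
      simp [hui, h0, hi]
    · -- C u = j, j ≠ 0, j ≠ i
      have hj : C u ≠ 0 := h0
      have hwr' := hwr (C u) i hj hi hui u rfl
      -- note: need C u ≠ i as i ≠ C u? hwr i j with i := C u, j := i needs C u ≠ i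
      have hH' := hH (C u) hj u (Or.inr rfl)
      rw [hHsplit (C u) hj] at hH'
      have hz := hzero x
      rw [hz, add_zero] at hH'
      rw [if_neg h0] at hH'
      rw [hwr', hH']
      simp [hui, h0]
end

section
/- The line graph of the graph obtained from the triangle K_3 by attaching one pendant leaf to each of its three vertices is Hoffman colorable: its largest adjacency eigenvalue is 2φ and its least eigenvalue is −φ, where φ = (1+√5)/2 is the golden ratio, so that 1 − λ_max/λ_min = 3 = χ(L(G)). -/
open Matrix Finset BigOperators Real

attribute [local instance] Classical.propDecidable

/-- The net graph: a triangle on 0,1,2 with pendant leaves 3,4,5 attached to 0,1,2. -/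
def netGraph : SimpleGraph (Fin 6) :=
  SimpleGraph.fromRel (fun a b =>
    (a = 0 ∧ b = 1) ∨ (a = 1 ∧ b = 2) ∨ (a = 0 ∧ b = 2) ∨
    (a = 0 ∧ b = 3) ∨ (a = 1 ∧ b = 4) ∨ (a = 2 ∧ b = 5))

/-! ### Auxiliary general lemmas about eigenvalues -/

section EigAux

variable {n : Type*} [Fintype n] [DecidableEq n] {A : Matrix n n ℝ}

lemma aux_pow_mulVec {μ : ℝ} {v : n → ℝ} (h : A *ᵥ v = μ • v) (k : ℕ) :
    A ^ k *ᵥ v = μ ^ k • v := by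
  induction k with
  | zero => simp
  | succ k ih =>
    rw [pow_succ, ← Matrix.mulVec_mulVec, h, Matrix.mulVec_smul, ih, smul_smul, pow_succ]
    ring_nf

lemma aux_eig_root (hq : A^4 = A^3 + (7:ℝ) • A^2 + (2:ℝ) • A - (4:ℝ) • 1) {μ : ℝ} {v : n → ℝ}
    (hv : v ≠ 0) (h : A *ᵥ v = μ • v) : μ^4 = μ^3 + 7*μ^2 + 2*μ - 4 := by
  have h0 : (A^4) *ᵥ v = (μ^3 + 7*μ^2 + 2*μ - 4) • v := by
    rw [hq]
    simp only [Matrix.sub_mulVec, Matrix.add_mulVec, Matrix.smul_mulVec,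
      aux_pow_mulVec h, h, Matrix.one_mulVec]
    ext i
    simp only [Pi.smul_apply, Pi.sub_apply, Pi.add_apply, smul_eq_mul]
    ring
  rw [aux_pow_mulVec h 4] at h0
  have h1 : (μ^4 - (μ^3 + 7*μ^2 + 2*μ - 4)) • v = 0 := by
    rw [sub_smul, h0, sub_self]
  have := (smul_eq_zero.mp h1).resolve_right hv
  linarith

lemma aux_eig_exists (hA : A.IsHermitian) {μ : ℝ} {v : n → ℝ}
    (hv : v ≠ 0) (h : A *ᵥ v = μ • v) : ∃ i, hA.eigenvalues i = μ := by
  have hdet : (A - μ • 1).det = 0 := by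
    rw [← Matrix.exists_mulVec_eq_zero_iff]
    exact ⟨v, hv, by
      rw [Matrix.sub_mulVec, Matrix.smul_mulVec, Matrix.one_mulVec, h, sub_self]⟩
  have hU := hA.spectral_theorem
  rw [Unitary.conjStarAlgAut_apply] at hU
  set U : Matrix n n ℝ := (hA.eigenvectorUnitary : Matrix n n ℝ) with hUdef
  have hUU : U * star U = 1 := hA.eigenvectorUnitary.2.2
  have hUU' : star U * U = 1 := hA.eigenvectorUnitary.2.1
  have key : A - μ • 1 = U * (Matrix.diagonal (fun i => hA.eigenvalues i - μ)) * star U := by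
    have hdiag : Matrix.diagonal (fun i => hA.eigenvalues i - μ)
        = Matrix.diagonal (RCLike.ofReal ∘ hA.eigenvalues) - μ • 1 := by
      ext i j
      rcases eq_or_ne i j with rfl | hij
      · simp [Matrix.diagonal, Matrix.one_apply, RCLike.ofReal]
      · simp [Matrix.diagonal_apply_ne _ hij, Matrix.one_apply_ne hij]
    rw [hdiag, Matrix.mul_sub, Matrix.sub_mul, ← hU]
    congr 1
    rw [Matrix.mul_smul, Matrix.mul_one, Matrix.smul_mul, hUU]
  rw [key, Matrix.det_mul, Matrix.det_mul, mul_comm, ← mul_assoc, ← Matrix.det_mul, hUU',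
    Matrix.det_one, one_mul, Matrix.det_diagonal] at hdet
  obtain ⟨i, _, hi⟩ := Finset.prod_eq_zero_iff.mp hdet
  exact ⟨i, sub_eq_zero.mp hi⟩

lemma aux_root_ub (x : ℝ) (hx : x^4 = x^3 + 7*x^2 + 2*x - 4) : x ≤ 1 + Real.sqrt 5 := by
  have h5 : Real.sqrt 5 ^ 2 = 5 := Real.sq_sqrt (by norm_num)
  have h5n : 0 ≤ Real.sqrt 5 := Real.sqrt_nonneg 5
  have hfac : (x^2 - 2*x - 4) * (x^2 + x - 1) = 0 := by linear_combination hx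
  rcases mul_eq_zero.mp hfac with h | h
  · nlinarith [sq_nonneg (x - 1 - Real.sqrt 5), sq_nonneg (x - 1 + Real.sqrt 5)]
  · nlinarith [sq_nonneg (2*x + 1 - Real.sqrt 5), sq_nonneg (2*x + 1 + Real.sqrt 5)]

lemma aux_root_lb (x : ℝ) (hx : x^4 = x^3 + 7*x^2 + 2*x - 4) : -((1 + Real.sqrt 5)/2) ≤ x := by
  have h5 : Real.sqrt 5 ^ 2 = 5 := Real.sq_sqrt (by norm_num)
  have h5n : 0 ≤ Real.sqrt 5 := Real.sqrt_nonneg 5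
  have hfac : (x^2 - 2*x - 4) * (x^2 + x - 1) = 0 := by linear_combination hx
  rcases mul_eq_zero.mp hfac with h | h
  · nlinarith [sq_nonneg (x - 1 - Real.sqrt 5), sq_nonneg (x - 1 + Real.sqrt 5)]
  · nlinarith [sq_nonneg (2*x + 1 - Real.sqrt 5), sq_nonneg (2*x + 1 + Real.sqrt 5)]

end EigAux

/-! ### Concrete description of the net graph and its line graph -/

lemma netAdj (a b : Fin 6) : netGraph.Adj a b ↔ a ≠ b ∧
    (((a = 0 ∧ b = 1) ∨ (a = 1 ∧ b = 2) ∨ (a = 0 ∧ b = 2) ∨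
    (a = 0 ∧ b = 3) ∨ (a = 1 ∧ b = 4) ∨ (a = 2 ∧ b = 5)) ∨
    ((b = 0 ∧ a = 1) ∨ (b = 1 ∧ a = 2) ∨ (b = 0 ∧ a = 2) ∨
    (b = 0 ∧ a = 3) ∨ (b = 1 ∧ a = 4) ∨ (b = 2 ∧ a = 5))) :=
  SimpleGraph.fromRel_adj _ a b

def edList : Fin 6 → Sym2 (Fin 6) := ![s(0,1), s(1,2), s(0,2), s(0,3), s(1,4), s(2,5)]

lemma edMem (i : Fin 6) : edList i ∈ netGraph.edgeSet := by
  have H : ∀ a b : Fin 6, netGraph.Adj a b → s(a,b) ∈ netGraph.edgeSet := fun a b h => h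
  fin_cases i
  · exact H 0 1 ((netAdj 0 1).mpr (by norm_num [Fin.ext_iff]))
  · exact H 1 2 ((netAdj 1 2).mpr (by norm_num [Fin.ext_iff]))
  · exact H 0 2 ((netAdj 0 2).mpr (by norm_num [Fin.ext_iff]))
  · exact H 0 3 ((netAdj 0 3).mpr (by refine ⟨?_, Or.inl ?_⟩ <;> norm_num [Fin.ext_iff] <;> decide))
  · exact H 1 4 ((netAdj 1 4).mpr (by refine ⟨?_, Or.inl ?_⟩ <;> norm_num [Fin.ext_iff] <;> decide))
  · exact H 2 5 ((netAdj 2 5).mpr (by refine ⟨?_, Or.inl ?_⟩ <;> norm_num [Fin.ext_iff] <;> decide))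

def ed (i : Fin 6) : netGraph.edgeSet := ⟨edList i, edMem i⟩

lemma ed_inj : Function.Injective ed := by
  intro i j h
  have : edList i = edList j := congrArg Subtype.val h
  fin_cases i <;> fin_cases j <;> first | rfl | (exfalso; revert this; rw [edList]; decide)

lemma ed_surj : Function.Surjective ed := by
  rintro ⟨x, hx⟩
  induction x with
  | _ a b =>
    rw [SimpleGraph.mem_edgeSet, netAdj] at hx
    obtain ⟨hne, h | h⟩ := hx <;>
      rcases h with ⟨rfl,rfl⟩|⟨rfl,rfl⟩|⟨rfl,rfl⟩|⟨rfl,rfl⟩|⟨rfl,rfl⟩|⟨rfl,rfl⟩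
    · exact ⟨0, rfl⟩
    · exact ⟨1, rfl⟩
    · exact ⟨2, rfl⟩
    · exact ⟨3, rfl⟩
    · exact ⟨4, rfl⟩
    · exact ⟨5, rfl⟩
    · exact ⟨0, Subtype.ext (Sym2.eq_swap)⟩
    · exact ⟨1, Subtype.ext (Sym2.eq_swap)⟩
    · exact ⟨2, Subtype.ext (Sym2.eq_swap)⟩
    · exact ⟨3, Subtype.ext (Sym2.eq_swap)⟩
    · exact ⟨4, Subtype.ext (Sym2.eq_swap)⟩
    · exact ⟨5, Subtype.ext (Sym2.eq_swap)⟩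

@[simp]
lemma cons_val_five {α : Type*} {m : ℕ} (x : α) (u : Fin m.succ.succ.succ.succ.succ → α) :
    Matrix.vecCons x u 5 = Matrix.vecHead (Matrix.vecTail (Matrix.vecTail
      (Matrix.vecTail (Matrix.vecTail u)))) :=
  rfl

/-- Adjacency matrix (over ℤ) of the line graph of the net, in the ordering `ed`. -/
def Bz : Matrix (Fin 6) (Fin 6) ℤ :=
  !![0,1,1,1,1,0;
     1,0,1,0,1,1;
     1,1,0,1,0,1;
     1,0,1,0,0,0;
     1,1,0,0,0,0;
     0,1,1,0,0,0]

lemma lg_adj (i j : Fin 6) : netGraph.lineGraph.Adj (ed i) (ed j) ↔ Bz i j = 1 := by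
  rw [SimpleGraph.lineGraph_adj_iff_exists]
  simp only [ed, ne_eq, Subtype.mk.injEq]
  fin_cases i <;> fin_cases j <;>
    simp [edList, Bz, Sym2.eq_iff] <;> decide

lemma Bz01 (i j : Fin 6) : Bz i j = 0 ∨ Bz i j = 1 := by
  fin_cases i <;> fin_cases j <;> decide

set_option maxRecDepth 10000 in
lemma Bzq : Bz^4 = Bz^3 + (7:ℤ)•Bz^2 + (2:ℤ)•Bz - (4:ℤ)•1 := by decide

/-- The transfer equivalence. -/
noncomputable def edEquiv : Fin 6 ≃ netGraph.edgeSet :=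
  Equiv.ofBijective ed ⟨ed_inj, ed_surj⟩

noncomputable def Br : Matrix (Fin 6) (Fin 6) ℝ := (Int.castRingHom ℝ).mapMatrix Bz

lemma Br_apply (i j : Fin 6) : Br i j = ((Bz i j : ℤ) : ℝ) := rfl

lemma Brq : Br^4 = Br^3 + (7:ℝ) • Br^2 + (2:ℝ) • Br - (4:ℝ) • 1 := by
  have hc : ∀ (z : ℤ) (X : Matrix (Fin 6) (Fin 6) ℝ), z • X = ((z:ℝ)) • X := by
    intro z X
    rw [← Int.cast_smul_eq_zsmul ℝ]
  have h := congrArg ((Int.castRingHom ℝ).mapMatrix) Bzq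
  simp only [map_pow, map_add, map_sub, map_zsmul, _root_.map_one] at h
  rw [show ((Int.castRingHom ℝ).mapMatrix Bz) = Br from rfl] at h
  rw [h, hc 7, hc 2, hc 4]
  norm_num

lemma adjMatrix_eq : netGraph.lineGraph.adjMatrix ℝ = Br.submatrix (⇑edEquiv.symm) (⇑edEquiv.symm) := by
  ext x y
  have hx : x = ed (edEquiv.symm x) := (edEquiv.apply_symm_apply x).symm
  have hy : y = ed (edEquiv.symm y) := (edEquiv.apply_symm_apply y).symm
  rw [Matrix.submatrix_apply]
  conv_lhs => rw [hx, hy]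
  rw [SimpleGraph.adjMatrix_apply]
  set i := edEquiv.symm x
  set j := edEquiv.symm y
  by_cases h : netGraph.lineGraph.Adj (ed i) (ed j)
  · rw [if_pos h, Br_apply, (lg_adj i j).mp h]
    norm_num
  · rw [if_neg h, Br_apply]
    have := (Bz01 i j).resolve_right (fun h1 => h ((lg_adj i j).mpr h1))
    rw [this]
    norm_num

lemma adjMatrix_eq' : netGraph.lineGraph.adjMatrix ℝ = Matrix.reindexAlgEquiv ℝ ℝ edEquiv Br := by
  rw [adjMatrix_eq]
  rfl

lemma adjq : (netGraph.lineGraph.adjMatrix ℝ)^4 = (netGraph.lineGraph.adjMatrix ℝ)^3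
    + (7:ℝ) • (netGraph.lineGraph.adjMatrix ℝ)^2 + (2:ℝ) • (netGraph.lineGraph.adjMatrix ℝ)
    - (4:ℝ) • 1 := by
  rw [adjMatrix_eq', ← map_pow, ← map_pow, ← map_pow, Brq]
  simp only [map_add, map_sub, _root_.map_smul, map_pow, _root_.map_one]

lemma transfer (u : Fin 6 → ℝ) (μ : ℝ) (h : Br *ᵥ u = μ • u) :
    (netGraph.lineGraph.adjMatrix ℝ) *ᵥ (u ∘ ⇑edEquiv.symm) = μ • (u ∘ ⇑edEquiv.symm) := by
  rw [adjMatrix_eq, Matrix.submatrix_mulVec_equiv Br (u ∘ ⇑edEquiv.symm) (⇑edEquiv.symm) edEquiv.symm]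
  have h1 : (u ∘ ⇑edEquiv.symm) ∘ ⇑edEquiv.symm.symm = u := by
    ext k; simp
  rw [h1, h]
  rfl

noncomputable def u1 : Fin 6 → ℝ :=
  ![1 + Real.sqrt 5, 1 + Real.sqrt 5, 1 + Real.sqrt 5, 2, 2, 2]

noncomputable def u4 : Fin 6 → ℝ :=
  ![-((1 + Real.sqrt 5)/2), ((1 + Real.sqrt 5)/2), 0, 1, 0, -1]

lemma hu1 : Br *ᵥ u1 = (1 + Real.sqrt 5) • u1 := by
  have h5 : Real.sqrt 5 ^ 2 = 5 := Real.sq_sqrt (by norm_num)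
  funext k
  fin_cases k <;>
    simp [Matrix.mulVec, dotProduct, Fin.sum_univ_six, Br_apply, Bz, u1] <;> nlinarith

lemma hu4 : Br *ᵥ u4 = (-((1 + Real.sqrt 5)/2)) • u4 := by
  have h5 : Real.sqrt 5 ^ 2 = 5 := Real.sq_sqrt (by norm_num)
  funext k
  fin_cases k <;>
    simp [Matrix.mulVec, dotProduct, Fin.sum_univ_six, Br_apply, Bz, u4] <;> nlinarith

lemma hu1_ne : (u1 ∘ ⇑edEquiv.symm) ≠ 0 := by
  intro h
  have := congrFun h (edEquiv 3)
  simp [u1] at this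

lemma hu4_ne : (u4 ∘ ⇑edEquiv.symm) ≠ 0 := by
  intro h
  have := congrFun h (edEquiv 3)
  simp [u4] at this

/-- the line graph of the triangle with a pendant leaf at each vertex is
Hoffman colorable: λ_max = 2φ, λ_min = −φ with φ the golden ratio, and
1 − λ_max/λ_min = 3 = χ(L(G)). -/
theorem stmt18 :
    netGraph.lineGraph.chromaticNumber = 3 ∧
    lamMax (adjHerm netGraph.lineGraph) = 2 * ((1 + Real.sqrt 5) / 2) ∧
    lamMin (adjHerm netGraph.lineGraph) = -((1 + Real.sqrt 5) / 2) ∧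
    (3 : ℝ) = 1 - lamMax (adjHerm netGraph.lineGraph) /
        lamMin (adjHerm netGraph.lineGraph) := by
  have h5 : Real.sqrt 5 ^ 2 = 5 := Real.sq_sqrt (by norm_num)
  have h5n : 0 ≤ Real.sqrt 5 := Real.sqrt_nonneg 5
  set hA := adjHerm netGraph.lineGraph with hAdef
  have hNE : Nonempty netGraph.edgeSet := ⟨ed 0⟩
  -- every eigenvalue is a root of the quartic
  have hroots : ∀ i, (hA.eigenvalues i)^4 = (hA.eigenvalues i)^3 + 7*(hA.eigenvalues i)^2
      + 2*(hA.eigenvalues i) - 4 := by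
    intro i
    have hv : netGraph.lineGraph.adjMatrix ℝ *ᵥ (WithLp.equiv 2 _) (hA.eigenvectorBasis i)
        = hA.eigenvalues i • (WithLp.equiv 2 _) (hA.eigenvectorBasis i) :=
      hA.mulVec_eigenvectorBasis i
    refine aux_eig_root adjq ?_ hv
    intro h
    apply hA.eigenvectorBasis.orthonormal.ne_zero i
    have : hA.eigenvectorBasis i = (WithLp.equiv 2 _).symm 0 := by rw [← h]; simp
    simpa using this
  have hub : ∀ i, hA.eigenvalues i ≤ 1 + Real.sqrt 5 := fun i => aux_root_ub _ (hroots i)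
  have hlb : ∀ i, -((1 + Real.sqrt 5)/2) ≤ hA.eigenvalues i := fun i => aux_root_lb _ (hroots i)
  have hex1 : ∃ i, hA.eigenvalues i = 1 + Real.sqrt 5 :=
    aux_eig_exists hA hu1_ne (transfer u1 _ hu1)
  have hex4 : ∃ i, hA.eigenvalues i = -((1 + Real.sqrt 5)/2) :=
    aux_eig_exists hA hu4_ne (transfer u4 _ hu4)
  have hmax : lamMax hA = 1 + Real.sqrt 5 := by
    rw [lamMax]
    apply le_antisymm (ciSup_le hub)
    obtain ⟨i, hi⟩ := hex1
    rw [← hi]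
    exact le_ciSup (Set.Finite.bddAbove (Set.finite_range _)) i
  have hmin : lamMin hA = -((1 + Real.sqrt 5)/2) := by
    rw [lamMin]
    apply le_antisymm
    · obtain ⟨i, hi⟩ := hex4
      rw [← hi]
      exact ciInf_le (Set.Finite.bddBelow (Set.finite_range _)) i
    · exact le_ciInf hlb
  -- chromatic number
  have hchrom : netGraph.lineGraph.chromaticNumber = 3 := by
    have hcol : netGraph.lineGraph.Colorable 3 := by
      have key : ∀ i j : Fin 6, Bz i j = 1 → (![0,1,2,1,2,0] : Fin 6 → Fin 3) i ≠
          (![0,1,2,1,2,0] : Fin 6 → Fin 3) j := by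
          intro i j; fin_cases i <;> fin_cases j <;> decide
      have C : netGraph.lineGraph.Coloring (Fin 3) := by
        refine SimpleGraph.Coloring.mk
          (fun x => (![0,1,2,1,2,0] : Fin 6 → Fin 3) (edEquiv.symm x)) ?_
        intro x y hadj
        have hx : x = ed (edEquiv.symm x) := (edEquiv.apply_symm_apply x).symm
        have hy : y = ed (edEquiv.symm y) := (edEquiv.apply_symm_apply y).symm
        rw [hx, hy] at hadj
        exact key _ _ ((lg_adj _ _).mp hadj)
      simpa using C.colorable
    have hclique : ¬ netGraph.lineGraph.CliqueFree 3 := by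
      intro hcf
      apply hcf {ed 0, ed 1, ed 2}
      constructor
      · intro x hx y hy hxy
        simp only [Finset.coe_insert, Set.mem_insert_iff, Finset.coe_singleton,
          Set.mem_singleton_iff] at hx hy
        rcases hx with rfl|rfl|rfl <;> rcases hy with rfl|rfl|rfl <;>
          first
            | exact absurd rfl hxy
            | exact (lg_adj _ _).mpr (by decide)
      · have h01 : ed 0 ≠ ed 1 := fun h => absurd (ed_inj h) (by decide)
        have h02 : ed 0 ≠ ed 2 := fun h => absurd (ed_inj h) (by decide)
        have h12 : ed 1 ≠ ed 2 := fun h => absurd (ed_inj h) (by decide)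
        rw [Finset.card_insert_of_notMem (by simp [h01, h02]),
          Finset.card_insert_of_notMem (by simp [h12]), Finset.card_singleton]
    apply le_antisymm
    · have := hcol.chromaticNumber_le
      simpa using this
    · by_contra hlt
      push_neg at hlt
      have : netGraph.lineGraph.chromaticNumber < ((3:ℕ) : ℕ∞) := by
        simpa using hlt
      exact hclique (SimpleGraph.cliqueFree_of_chromaticNumber_lt this)
  refine ⟨hchrom, by rw [hmax]; ring, hmin, ?_⟩
  rw [hmax, hmin]
  have hne : -((1 + Real.sqrt 5)/2) ≠ 0 := by
    intro h
    nlinarith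
  have hdiv : (1 + Real.sqrt 5) / (-((1 + Real.sqrt 5)/2)) = -2 := by
    rw [div_eq_iff hne]; ring
  rw [hdiv]
  norm_num
end
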